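/- arXiv:1601.02365 — 7 statements merged into one kernel-verified Lean document; each statement's English description precedes it below -/
import Mathlib

section
/- Let m, n ≥ 1. Let A be a real symmetric 2m×2m matrix, C a real symmetric 2n×2n matrix and B a real 2m×2n matrix such that S = [[A, B],[Bᵀ, C]] satisfies S + (i/2)J_{2(m+n)} ≥ 0, and assume that the complex matrices A + (i/2)J_{2m} and C + (i/2)J_{2n} are invertible. Then S is completely extendable with respect to the second system if and only if there exists a real symmetric positive semidefinite 2n×2n matrix θ such that both C + (i/2)J_{2n} − θ and θ − Bᵀ (A + (i/2)J_{2m})⁻¹ B are positive semidefinite complex matrices. -/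
open Matrix Complex
open scoped Kronecker ComplexOrder

noncomputable section

/-- The standard symplectic-form matrix `J_{2n}`: the block-diagonal direct sum of `n`
copies of `[[0,1],[-1,0]]`. -/
def Jmat (n : ℕ) : Matrix (Fin (2 * n)) (Fin (2 * n)) ℝ := fun i j =>
  if i.val + 1 = j.val ∧ i.val % 2 = 0 then 1
  else if j.val + 1 = i.val ∧ j.val % 2 = 0 then -1 else 0

/-- Embedding of real matrices into complex matrices. -/
def toC {p q : Type*} (M : Matrix p q ℝ) : Matrix p q ℂ := M.map (fun x => (x : ℂ))

/-- The `k`-extension `S_k(A,B,C,θ)` of the block covariance matrix `[[A,B],[Bᵀ,C]]`: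
the `(0,0)`-block is `A`, the blocks coupling the `0`-component to each of the `k` copies
are `B` (with `Bᵀ` below), the diagonal blocks on the copies are `C`, and the block between
copies `a < b` is `θ` (and `θᵀ` between copies `a > b`). -/
def Sext {m n : ℕ} (k : ℕ) (A : Matrix (Fin (2 * m)) (Fin (2 * m)) ℝ)
    (B : Matrix (Fin (2 * m)) (Fin (2 * n)) ℝ)
    (C θ : Matrix (Fin (2 * n)) (Fin (2 * n)) ℝ) :
    Matrix (Fin (2 * m) ⊕ Fin k × Fin (2 * n)) (Fin (2 * m) ⊕ Fin k × Fin (2 * n)) ℝ :=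
  fun x y =>
    match x, y with
    | Sum.inl i, Sum.inl j => A i j
    | Sum.inl i, Sum.inr (_, j) => B i j
    | Sum.inr (_, i), Sum.inl j => B j i
    | Sum.inr (a, i), Sum.inr (b, j) =>
        if a = b then C i j else if a < b then θ i j else θ j i

/-- The symplectic-form matrix `J' = J_{2m} ⊕ (I_k ⊗ J_{2n})` on the index set of `S_k`. -/
def Jext (m n k : ℕ) :
    Matrix (Fin (2 * m) ⊕ Fin k × Fin (2 * n)) (Fin (2 * m) ⊕ Fin k × Fin (2 * n)) ℝ :=
  Matrix.fromBlocks (Jmat m) 0 0 ((1 : Matrix (Fin k) (Fin k) ℝ) ⊗ₖ Jmat n)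

namespace GCE

variable {m n : ℕ}

/-- entrywise cast lemmas -/
@[simp] lemma toC_apply {p q : Type*} (M : Matrix p q ℝ) (i : p) (j : q) :
    toC M i j = (M i j : ℂ) := rfl

lemma toC_conjTranspose {p q : Type*} (M : Matrix p q ℝ) : (toC M)ᴴ = toC Mᵀ := by
  ext i j; simp [toC, conjTranspose_apply]

lemma toC_transpose {p q : Type*} (M : Matrix p q ℝ) : (toC M)ᵀ = toC Mᵀ := by
  ext i j; simp [toC]

lemma Jmat_diag (p : ℕ) (i : Fin (2 * p)) : Jmat p i i = 0 := by
  simp [Jmat]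

/-- PSD + invertible implies PosDef -/
lemma posDef_of_posSemidef_isUnit {p : Type*} [Fintype p] [DecidableEq p]
    {M : Matrix p p ℂ} (h : M.PosSemidef) (hu : IsUnit M) : M.PosDef := by
  refine PosDef.of_dotProduct_mulVec_pos h.1 fun x hx => ?_
  rcases (h.dotProduct_mulVec_nonneg x).lt_or_eq with hlt | heq
  · exact hlt
  · exfalso
    have h0 : M *ᵥ x = 0 := (h.dotProduct_mulVec_zero_iff x).mp heq.symm
    have : Function.Injective (M.mulVec) := by
      haveI := hu.nonempty_invertible.some
      exact (Matrix.mulVec_injective_of_invertible M)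
    exact hx (this (by simpa using h0))

/-- conjugate of a sesquilinear form -/
lemma conj_qf {p q : Type*} [Fintype p] [Fintype q] (P : Matrix p q ℂ)
    (u : p → ℂ) (v : q → ℂ) :
    star v ⬝ᵥ Pᴴ *ᵥ u = starRingEnd ℂ (star u ⬝ᵥ P *ᵥ v) := by
  simp only [dotProduct, mulVec, Pi.star_apply, conjTranspose_apply, map_sum,
    Finset.mul_sum, starRingEnd_apply]
  rw [Finset.sum_comm]
  refine Finset.sum_congr rfl fun i _ => Finset.sum_congr rfl fun j _ => ?_
  simp only [star_mul', star_star]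
  ring

lemma herm_qf_im {p : Type*} [Fintype p] {H : Matrix p p ℂ} (hH : H.IsHermitian)
    (x : p → ℂ) : (star x ⬝ᵥ H *ᵥ x).im = 0 := by
  have := conj_qf H x x
  rw [hH] at this
  have h2 : starRingEnd ℂ (star x ⬝ᵥ H *ᵥ x) = star x ⬝ᵥ H *ᵥ x := this.symm
  have := Complex.conj_eq_iff_im.mp h2
  exact this

lemma posSemidef_of_re_nonneg {p : Type*} [Fintype p] {H : Matrix p p ℂ}
    (hH : H.IsHermitian) (h : ∀ x, 0 ≤ (star x ⬝ᵥ H *ᵥ x).re) : H.PosSemidef := by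
  refine PosSemidef.of_dotProduct_mulVec_nonneg hH fun x => ?_
  rw [Complex.le_def]
  exact ⟨by simpa using h x, by simpa using (herm_qf_im hH x).symm⟩

end GCE

namespace GCE
section Struct
variable {m n : ℕ}

/-- `M + (i/2) J` for a real matrix. -/
def MJ {p : ℕ} (A : Matrix (Fin (2 * p)) (Fin (2 * p)) ℝ) :
    Matrix (Fin (2 * p)) (Fin (2 * p)) ℂ :=
  toC A + (Complex.I / 2) • toC (Jmat p)

lemma MJ_apply {p : ℕ} (A : Matrix (Fin (2 * p)) (Fin (2 * p)) ℝ) (i j) :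
    MJ A i j = (A i j : ℂ) + (Complex.I / 2) * (Jmat p i j : ℂ) := rfl

lemma MJ_diag {p : ℕ} (A : Matrix (Fin (2 * p)) (Fin (2 * p)) ℝ) (i) :
    MJ A i i = (A i i : ℂ) := by
  simp [MJ_apply, Jmat_diag]

/-- The top-right block of the `k`-extension. -/
def Bk (B : Matrix (Fin (2 * m)) (Fin (2 * n)) ℝ) (k : ℕ) :
    Matrix (Fin (2 * m)) (Fin k × Fin (2 * n)) ℂ := fun i p => (B i p.2 : ℂ)

/-- The bottom-right block of the `k`-extension. -/
def Dk (k : ℕ) (C θ : Matrix (Fin (2 * n)) (Fin (2 * n)) ℝ) :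
    Matrix (Fin k × Fin (2 * n)) (Fin k × Fin (2 * n)) ℂ := fun p q =>
  if p.1 = q.1 then MJ C p.2 q.2
  else ((if p.1 < q.1 then θ p.2 q.2 else θ q.2 p.2 : ℝ) : ℂ)

lemma big_eq (A : Matrix (Fin (2 * m)) (Fin (2 * m)) ℝ)
    (B : Matrix (Fin (2 * m)) (Fin (2 * n)) ℝ)
    (C θ : Matrix (Fin (2 * n)) (Fin (2 * n)) ℝ) (k : ℕ) :
    toC (Sext k A B C θ) + (Complex.I / 2) • toC (Jext m n k)
      = Matrix.fromBlocks (MJ A) (Bk B k) (Bk B k)ᴴ (Dk k C θ) := by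
  ext x y
  rcases x with i | ⟨a, i⟩ <;> rcases y with j | ⟨b, j⟩
  · simp [Sext, Jext, MJ, toC]
  · simp [Sext, Jext, Bk, toC]
  · simp [Sext, Jext, Bk, toC, conjTranspose_apply]
  · by_cases hab : a = b
    · simp [Sext, Jext, Dk, MJ, toC, hab, Matrix.one_apply]
    · simp [Sext, Jext, Dk, MJ, toC, hab, Matrix.one_apply]

lemma hS_eq (A : Matrix (Fin (2 * m)) (Fin (2 * m)) ℝ)
    (B : Matrix (Fin (2 * m)) (Fin (2 * n)) ℝ)
    (C : Matrix (Fin (2 * n)) (Fin (2 * n)) ℝ) :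
    toC (Matrix.fromBlocks A B Bᵀ C) +
      (Complex.I / 2) • toC (Matrix.fromBlocks (Jmat m) 0 0 (Jmat n))
      = Matrix.fromBlocks (MJ A) (toC B) (toC B)ᴴ (MJ C) := by
  ext x y
  rcases x with i | i <;> rcases y with j | j <;>
    simp [MJ, toC, conjTranspose_apply]

end Struct
end GCE

namespace GCE
section QF
variable {m n : ℕ}

/-- star of a Sum.elim -/
lemma star_elim {α β : Type*} (u : α → ℂ) (w : β → ℂ) :
    star (Sum.elim u w) = Sum.elim (star u) (star w) := by
  funext p; rcases p with p | p <;> rfl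

/-- column sum of the copies part -/
def ysum {k : ℕ} (w : Fin k × Fin (2 * n) → ℂ) : Fin (2 * n) → ℂ :=
  fun i => ∑ a, w (a, i)

lemma qf_cross1 (B : Matrix (Fin (2 * m)) (Fin (2 * n)) ℝ) {k : ℕ}
    (u : Fin (2 * m) → ℂ) (w : Fin k × Fin (2 * n) → ℂ) :
    star u ⬝ᵥ (Bk B k) *ᵥ w = star u ⬝ᵥ toC B *ᵥ ysum w := by
  simp only [dotProduct, mulVec, Bk, toC_apply, ysum]
  refine Finset.sum_congr rfl fun i _ => ?_
  congr 1
  rw [Fintype.sum_prod_type, Finset.sum_comm]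
  simp only [Finset.mul_sum]

lemma qf_cross2 (B : Matrix (Fin (2 * m)) (Fin (2 * n)) ℝ) {k : ℕ}
    (u : Fin (2 * m) → ℂ) (w : Fin k × Fin (2 * n) → ℂ) :
    star w ⬝ᵥ (Bk B k)ᴴ *ᵥ u = star (ysum w) ⬝ᵥ (toC B)ᴴ *ᵥ u := by
  simp only [dotProduct, mulVec, Bk, conjTranspose_apply, toC_apply, ysum, Pi.star_apply]
  rw [Fintype.sum_prod_type, Finset.sum_comm]
  refine Finset.sum_congr rfl fun i _ => ?_
  rw [star_sum, Finset.sum_mul]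

/-- E1 : splitting of the quadratic form of the big matrix -/
lemma qf_split (A : Matrix (Fin (2 * m)) (Fin (2 * m)) ℝ)
    (B : Matrix (Fin (2 * m)) (Fin (2 * n)) ℝ)
    (C θ : Matrix (Fin (2 * n)) (Fin (2 * n)) ℝ) (k : ℕ)
    (x : (Fin (2 * m) ⊕ Fin k × Fin (2 * n)) → ℂ) :
    star x ⬝ᵥ (toC (Sext k A B C θ) + (Complex.I / 2) • toC (Jext m n k)) *ᵥ x
      = star (x ∘ Sum.inl) ⬝ᵥ MJ A *ᵥ (x ∘ Sum.inl)
        + star (x ∘ Sum.inl) ⬝ᵥ toC B *ᵥ ysum (x ∘ Sum.inr)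
        + star (ysum (x ∘ Sum.inr)) ⬝ᵥ (toC B)ᴴ *ᵥ (x ∘ Sum.inl)
        + star (x ∘ Sum.inr) ⬝ᵥ (Dk k C θ) *ᵥ (x ∘ Sum.inr) := by
  rw [big_eq]
  conv_lhs => rw [← Sum.elim_comp_inl_inr x]
  rw [star_elim, fromBlocks_mulVec, sumElim_dotProduct_sumElim, dotProduct_add,
    dotProduct_add, qf_cross1, qf_cross2]
  simp only [Sum.elim_comp_inl, Sum.elim_comp_inr]
  ring

/-- E2 : the quadratic form of the `D` block for symmetric θ. -/
lemma qf_D_sym (C θ : Matrix (Fin (2 * n)) (Fin (2 * n)) ℝ) (hθ : θᵀ = θ) (k : ℕ)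
    (w : Fin k × Fin (2 * n) → ℂ) :
    star w ⬝ᵥ (Dk k C θ) *ᵥ w
      = (∑ a, star (fun i => w (a, i)) ⬝ᵥ (MJ C - toC θ) *ᵥ (fun i => w (a, i)))
        + star (ysum w) ⬝ᵥ toC θ *ᵥ ysum w := by
  have hD : ∀ p q : Fin k × Fin (2 * n),
      Dk k C θ p q = (if p.1 = q.1 then (MJ C - toC θ) p.2 q.2 else 0) + (θ p.2 q.2 : ℂ) := by
    intro p q
    by_cases hab : p.1 = q.1
    · simp [Dk, hab]
    · rcases lt_or_gt_of_ne hab with hlt | hgt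
      · simp [Dk, hab, hlt]
      · have : ¬ p.1 < q.1 := not_lt_of_gt hgt
        have hsym : θ q.2 p.2 = θ p.2 q.2 := by
          rw [← congrFun (congrFun hθ q.2) p.2, transpose_apply]
        simp [Dk, hab, this, hsym]
  calc star w ⬝ᵥ (Dk k C θ) *ᵥ w
      = ∑ p, ∑ q, star (w p) * ((if p.1 = q.1 then (MJ C - toC θ) p.2 q.2 else 0) * w q)
        + ∑ p, ∑ q, star (w p) * ((θ p.2 q.2 : ℂ) * w q) := by
        simp only [dotProduct, mulVec, Pi.star_apply, hD]
        rw [← Finset.sum_add_distrib]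
        refine Finset.sum_congr rfl fun p _ => ?_
        rw [← Finset.sum_add_distrib, Finset.mul_sum]
        refine Finset.sum_congr rfl fun q _ => ?_
        ring
    _ = _ := by
        congr 1
        · rw [Fintype.sum_prod_type]
          refine Finset.sum_congr rfl fun a _ => ?_
          simp only [dotProduct, mulVec, Pi.star_apply]
          refine Finset.sum_congr rfl fun i _ => ?_
          rw [Fintype.sum_prod_type, Finset.sum_eq_single a]
          · simp [Finset.mul_sum]
          · intro b _ hb; simp [Ne.symm hb]
          · intro h; exact absurd (Finset.mem_univ a) h
        · simp only [dotProduct, mulVec, ysum, Pi.star_apply, toC_apply, star_sum,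
            Finset.mul_sum, Finset.sum_mul]
          rw [Fintype.sum_prod_type, Finset.sum_comm]
          refine Finset.sum_congr rfl fun i _ => ?_
          have h1 : ∀ a : Fin k, (∑ q : Fin k × Fin (2 * n),
              star (w (a, i)) * ((θ (a, i).2 q.2 : ℂ) * w q))
              = ∑ j : Fin (2 * n), ∑ b : Fin k,
                star (w (a, i)) * ((θ i j : ℂ) * w (b, j)) := fun a => by
            rw [Fintype.sum_prod_type, Finset.sum_comm]
          rw [Finset.sum_congr rfl fun a _ => h1 a, Finset.sum_comm]
          refine Finset.sum_congr rfl fun j _ => ?_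
          rw [Finset.sum_comm]

end QF
end GCE

namespace GCE
section Count
variable {m n : ℕ}

lemma sum_ite_count (k : ℕ) (γ t t' : ℂ) :
    ∑ a : Fin k, ∑ b : Fin k, (if a = b then γ else if a < b then t else t')
      = (k : ℂ) * γ + (((k : ℂ) ^ 2 - k) / 2) * (t + t') := by
  have key : ∀ a b : Fin k, (if a = b then γ else if a < b then t else t')
      = (if a = b then γ else 0) + (if a < b then t else 0) + (if b < a then t' else 0) := by
    intro a b
    rcases lt_trichotomy a b with h | h | h
    · simp [h, ne_of_lt h, asymm h]
    · simp [h, lt_irrefl]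
    · simp [h, (ne_of_lt h).symm, asymm h]
  have key1 : ∀ a b : Fin k, ((if a = b then (1:ℂ) else 0) + (if a < b then (1:ℂ) else 0)
      + (if b < a then (1:ℂ) else 0)) = 1 := by
    intro a b
    rcases lt_trichotomy a b with h | h | h
    · simp [h, ne_of_lt h, asymm h]
    · simp [h, lt_irrefl]
    · simp [h, (ne_of_lt h).symm, asymm h]
  set Pc := ∑ a : Fin k, ∑ b : Fin k, (if a < b then (1:ℂ) else 0) with hPc
  have hdiag : ∀ (γ' : ℂ), ∑ a : Fin k, ∑ b : Fin k, (if a = b then γ' else 0) = (k : ℂ) * γ' := by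
    intro γ'
    have : ∀ a : Fin k, ∑ b : Fin k, (if a = b then γ' else 0) = γ' := fun a => by
      simp
    simp [this, Finset.sum_const, mul_comm]
  have hlt : ∀ (t₀ : ℂ), ∑ a : Fin k, ∑ b : Fin k, (if a < b then t₀ else 0) = Pc * t₀ := by
    intro t₀
    rw [hPc, Finset.sum_mul]
    refine Finset.sum_congr rfl fun a _ => ?_
    rw [Finset.sum_mul]
    refine Finset.sum_congr rfl fun b _ => ?_
    by_cases h : a < b <;> simp [h]
  have hgt : ∀ (t₀ : ℂ), ∑ a : Fin k, ∑ b : Fin k, (if b < a then t₀ else 0) = Pc * t₀ := by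
    intro t₀
    rw [Finset.sum_comm]
    exact hlt t₀
  have hsum1 : ∑ a : Fin k, ∑ b : Fin k, ((if a = b then (1:ℂ) else 0)
      + (if a < b then (1:ℂ) else 0) + (if b < a then (1:ℂ) else 0)) = (k : ℂ) * k := by
    rw [Finset.sum_congr rfl fun a _ => Finset.sum_congr rfl fun b _ => key1 a b]
    simp [Finset.sum_const, mul_comm]
  have hcount : (k : ℂ) * 1 + Pc * 1 + Pc * 1 = (k : ℂ) * k := by
    rw [← hsum1]
    simp only [Finset.sum_add_distrib]
    rw [hdiag 1, hlt 1, hgt 1]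
  calc ∑ a : Fin k, ∑ b : Fin k, (if a = b then γ else if a < b then t else t')
      = ∑ a : Fin k, ∑ b : Fin k, ((if a = b then γ else 0) + (if a < b then t else 0)
          + (if b < a then t' else 0)) :=
        Finset.sum_congr rfl fun a _ => Finset.sum_congr rfl fun b _ => key a b
    _ = (k : ℂ) * γ + Pc * t + Pc * t' := by
        simp only [Finset.sum_add_distrib]
        rw [hdiag γ, hlt t, hgt t']
    _ = (k : ℂ) * γ + (((k : ℂ) ^ 2 - k) / 2) * (t + t') := by
        have h2 : 2 * Pc = (k : ℂ) ^ 2 - k := by linear_combination hcount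
        linear_combination ((t + t') / 2) * h2

lemma rank_one_inner (P : Matrix (Fin (2 * n)) (Fin (2 * n)) ℂ) (ca cb : ℂ)
    (v : Fin (2 * n) → ℂ) :
    ∑ i, (star (ca * v i)) * ∑ j, P i j * (cb * v j)
      = (star ca * cb) * (star v ⬝ᵥ P *ᵥ v) := by
  simp only [dotProduct, mulVec, Pi.star_apply, star_mul', Finset.mul_sum, Finset.sum_mul]
  refine Finset.sum_congr rfl fun i _ => Finset.sum_congr rfl fun j _ => by ring

lemma qf_D_rank_one (C θ : Matrix (Fin (2 * n)) (Fin (2 * n)) ℝ) (k : ℕ)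
    (c : Fin k → ℂ) (v : Fin (2 * n) → ℂ) :
    star (fun p : Fin k × Fin (2 * n) => c p.1 * v p.2) ⬝ᵥ
        (Dk k C θ) *ᵥ (fun p : Fin k × Fin (2 * n) => c p.1 * v p.2)
      = ∑ a : Fin k, ∑ b : Fin k, (star (c a) * c b) *
          (if a = b then (star v ⬝ᵥ MJ C *ᵥ v)
           else if a < b then (star v ⬝ᵥ toC θ *ᵥ v) else (star v ⬝ᵥ toC θᵀ *ᵥ v)) := by
  set γ := star v ⬝ᵥ MJ C *ᵥ v with hγ
  set tθ := star v ⬝ᵥ toC θ *ᵥ v with htθ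
  set tθ' := star v ⬝ᵥ toC θᵀ *ᵥ v with htθ'
  simp only [dotProduct, mulVec, Pi.star_apply]
  rw [Fintype.sum_prod_type]
  have inner : ∀ (a : Fin k) (i : Fin (2 * n)),
      (∑ q : Fin k × Fin (2 * n), Dk k C θ (a, i) q * (c q.1 * v q.2))
        = ∑ b : Fin k, ∑ j : Fin (2 * n), Dk k C θ (a, i) (b, j) * (c b * v j) := by
    intro a i; rw [Fintype.sum_prod_type]
  refine Finset.sum_congr rfl fun a _ => ?_
  calc ∑ i, star (c a * v i) * (∑ q : Fin k × Fin (2 * n), Dk k C θ (a, i) q * (c q.1 * v q.2))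
      = ∑ b : Fin k, ∑ i, star (c a * v i) *
          (∑ j : Fin (2 * n), Dk k C θ (a, i) (b, j) * (c b * v j)) := by
        simp only [inner]
        rw [Finset.sum_comm]
        refine Finset.sum_congr rfl fun i _ => ?_
        rw [Finset.mul_sum]
    _ = _ := by
        refine Finset.sum_congr rfl fun b _ => ?_
        rcases lt_trichotomy a b with h | h | h
        · have e1 : ∀ i j, Dk k C θ (a, i) (b, j) = toC θ i j := fun i j => by
            simp [Dk, ne_of_lt h, h]
          simp only [e1]
          rw [rank_one_inner (toC θ) (c a) (c b) v, ← htθ, if_neg (ne_of_lt h), if_pos h]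
        · subst h
          have e1 : ∀ i j, Dk k C θ (a, i) (a, j) = MJ C i j := fun i j => by simp [Dk]
          simp only [e1]
          rw [rank_one_inner (MJ C) (c a) (c a) v, ← hγ]
          simp
        · have e1 : ∀ i j, Dk k C θ (a, i) (b, j) = (toC θᵀ) i j := fun i j => by
            simp [Dk, (ne_of_lt h).symm, asymm h, toC, transpose_apply]
          simp only [e1]
          rw [rank_one_inner (toC θᵀ) (c a) (c b) v, ← htθ',
            if_neg (ne_of_lt h).symm, if_neg (asymm h)]

end Count
end GCE

namespace GCE
section Conseq
variable {m n : ℕ}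
variable {A : Matrix (Fin (2 * m)) (Fin (2 * m)) ℝ}
variable {B : Matrix (Fin (2 * m)) (Fin (2 * n)) ℝ}
variable {C θ : Matrix (Fin (2 * n)) (Fin (2 * n)) ℝ} {k : ℕ}

lemma fb_psd (HBig : (toC (Sext k A B C θ) + (Complex.I / 2) • toC (Jext m n k)).PosSemidef) :
    (Matrix.fromBlocks (MJ A) (Bk B k) (Bk B k)ᴴ (Dk k C θ)).PosSemidef := by
  rw [← big_eq]; exact HBig

/-- Consequence 1 : entries of θ are bounded. -/
lemma entry_bound (HBig : (toC (Sext k A B C θ) +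
      (Complex.I / 2) • toC (Jext m n k)).PosSemidef)
    {a b : Fin k} (hab : a < b) (i j : Fin (2 * n)) :
    |θ i j| ≤ (C i i + C j j) / 2 := by
  have hFB := fb_psd HBig
  have key : ∀ ε : ℝ, 0 ≤ C i i + 2 * ε * θ i j + ε ^ 2 * C j j := by
    intro ε
    have hq := (hFB.submatrix ![Sum.inr (a, i), Sum.inr (b, j)]).dotProduct_mulVec_nonneg ![1, (ε : ℂ)]
    have hz : star ![(1 : ℂ), (ε : ℂ)] ⬝ᵥ
        ((Matrix.fromBlocks (MJ A) (Bk B k) (Bk B k)ᴴ (Dk k C θ)).submatrix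
          ![Sum.inr (a, i), Sum.inr (b, j)] ![Sum.inr (a, i), Sum.inr (b, j)]) *ᵥ
        ![(1 : ℂ), (ε : ℂ)]
        = ((C i i + 2 * ε * θ i j + ε ^ 2 * C j j : ℝ) : ℂ) := by
      simp [dotProduct, mulVec, Fin.sum_univ_two, Dk, MJ_apply, Jmat_diag, hab,
        ne_of_lt hab, asymm hab, (ne_of_lt hab).symm]
      push_cast
      ring
    rw [hz] at hq
    exact Complex.zero_le_real.mp hq
  have h1 := key 1
  have h2 := key (-1)
  rw [abs_le]
  constructor <;> nlinarith [h1, h2]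

/-- Consequence 2 : two-copy inequality. -/
lemma twocopy (HBig : (toC (Sext k A B C θ) +
      (Complex.I / 2) • toC (Jext m n k)).PosSemidef)
    (hk : 2 ≤ k) (v : Fin (2 * n) → ℂ) :
    (star v ⬝ᵥ toC θ *ᵥ v).re + (star v ⬝ᵥ toC θᵀ *ᵥ v).re
      ≤ 2 * (star v ⬝ᵥ MJ C *ᵥ v).re := by
  have hFB := fb_psd HBig
  set e : Fin 2 × Fin (2 * n) → (Fin (2 * m) ⊕ Fin k × Fin (2 * n)) :=
    fun p => Sum.inr (Fin.castLE hk p.1, p.2) with he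
  have hsub : (Matrix.fromBlocks (MJ A) (Bk B k) (Bk B k)ᴴ (Dk k C θ)).submatrix e e
      = Dk 2 C θ := by
    ext p q
    have h1 : (Fin.castLE hk p.1 = Fin.castLE hk q.1) = (p.1 = q.1) := by
      simp only [Fin.castLE_inj]
    have h2 : (Fin.castLE hk p.1 < Fin.castLE hk q.1) = (p.1 < q.1) := by
      simp only [Fin.lt_def, Fin.coe_castLE]
    show (Matrix.fromBlocks (MJ A) (Bk B k) (Bk B k)ᴴ (Dk k C θ))
      (Sum.inr (Fin.castLE hk p.1, p.2)) (Sum.inr (Fin.castLE hk q.1, q.2)) = Dk 2 C θ p q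
    rw [Matrix.fromBlocks_apply₂₂]
    simp only [Dk, h1, h2]
  have hP := hFB.submatrix e
  rw [hsub] at hP
  have hq := hP.dotProduct_mulVec_nonneg (fun p : Fin 2 × Fin (2 * n) => (![(1 : ℂ), -1]) p.1 * v p.2)
  rw [qf_D_rank_one] at hq
  have hval : ∑ a : Fin 2, ∑ b : Fin 2, (star ((![(1 : ℂ), -1]) a) * (![(1 : ℂ), -1]) b) *
        (if a = b then (star v ⬝ᵥ MJ C *ᵥ v)
         else if a < b then (star v ⬝ᵥ toC θ *ᵥ v) else (star v ⬝ᵥ toC θᵀ *ᵥ v))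
      = 2 * (star v ⬝ᵥ MJ C *ᵥ v) - (star v ⬝ᵥ toC θ *ᵥ v) - (star v ⬝ᵥ toC θᵀ *ᵥ v) := by
    rw [Fin.sum_univ_two, Fin.sum_univ_two, Fin.sum_univ_two]
    have h01 : ((0 : Fin 2) < 1) := by decide
    have hne : ((0 : Fin 2) ≠ 1) := by decide
    have hnlt : ¬ ((1 : Fin 2) < 0) := by decide
    simp [hne, h01, hne.symm, hnlt]
    ring
  rw [hval] at hq
  have hre := (Complex.le_def.mp hq).1
  have h2re : (2 * (star v ⬝ᵥ MJ C *ᵥ v)).re = 2 * (star v ⬝ᵥ MJ C *ᵥ v).re := by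
    simp [Complex.mul_re]
  simp only [Complex.zero_re, Complex.sub_re, h2re] at hre
  linarith [hre]

/-- Consequence 3 : constant-vector inequality. -/
lemma constc (HBig : (toC (Sext k A B C θ) +
      (Complex.I / 2) • toC (Jext m n k)).PosSemidef)
    (u : Fin (2 * m) → ℂ) (v : Fin (2 * n) → ℂ) (r : ℝ) :
    0 ≤ (star u ⬝ᵥ MJ A *ᵥ u).re + ((k : ℝ) * r) * (star u ⬝ᵥ toC B *ᵥ v).re
        + ((k : ℝ) * r) * (star u ⬝ᵥ toC B *ᵥ v).re
        + r ^ 2 * ((k : ℝ) * (star v ⬝ᵥ MJ C *ᵥ v).re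
          + (((k : ℝ) ^ 2 - (k : ℝ)) / 2) *
            ((star v ⬝ᵥ toC θ *ᵥ v).re + (star v ⬝ᵥ toC θᵀ *ᵥ v).re)) := by
  set c : Fin k → ℂ := fun _ => ((r : ℝ) : ℂ) with hc
  set x : (Fin (2 * m) ⊕ Fin k × Fin (2 * n)) → ℂ :=
    Sum.elim u (fun p : Fin k × Fin (2 * n) => c p.1 * v p.2) with hx
  have hq := HBig.dotProduct_mulVec_nonneg x
  rw [qf_split] at hq
  have hxl : x ∘ Sum.inl = u := rfl
  have hxr : x ∘ Sum.inr = (fun p : Fin k × Fin (2 * n) => c p.1 * v p.2) := rfl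
  have hy : ysum (fun p : Fin k × Fin (2 * n) => c p.1 * v p.2)
      = fun i => (((k : ℝ) * r : ℝ) : ℂ) * v i := by
    funext i
    simp [ysum, hc, Finset.sum_const, Fintype.card_fin]
    push_cast
    ring
  rw [hxl, hxr, hy] at hq
  -- cross terms
  have hcross1 : star u ⬝ᵥ toC B *ᵥ (fun i => (((k : ℝ) * r : ℝ) : ℂ) * v i)
      = (((k : ℝ) * r : ℝ) : ℂ) * (star u ⬝ᵥ toC B *ᵥ v) := by
    have : (fun i => (((k : ℝ) * r : ℝ) : ℂ) * v i) = (((k : ℝ) * r : ℝ) : ℂ) • v := rfl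
    rw [this, mulVec_smul, dotProduct_smul, smul_eq_mul]
  have hcross2 : star (fun i => (((k : ℝ) * r : ℝ) : ℂ) * v i) ⬝ᵥ (toC B)ᴴ *ᵥ u
      = (((k : ℝ) * r : ℝ) : ℂ) * starRingEnd ℂ (star u ⬝ᵥ toC B *ᵥ v) := by
    have h1 : star (fun i => (((k : ℝ) * r : ℝ) : ℂ) * v i)
        = (((k : ℝ) * r : ℝ) : ℂ) • star v := by
      funext i
      simp [mul_comm]
    rw [h1, smul_dotProduct, smul_eq_mul, conj_qf]
  rw [hcross1, hcross2, qf_D_rank_one] at hq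
  -- D-term
  have hD : ∑ a : Fin k, ∑ b : Fin k, (star (c a) * c b) *
        (if a = b then (star v ⬝ᵥ MJ C *ᵥ v)
         else if a < b then (star v ⬝ᵥ toC θ *ᵥ v) else (star v ⬝ᵥ toC θᵀ *ᵥ v))
      = ((r ^ 2 : ℝ) : ℂ) * (((k : ℝ) : ℂ) * (star v ⬝ᵥ MJ C *ᵥ v)
          + (((((k : ℝ) ^ 2 - (k : ℝ)) / 2 : ℝ)) : ℂ) *
            ((star v ⬝ᵥ toC θ *ᵥ v) + (star v ⬝ᵥ toC θᵀ *ᵥ v))) := by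
    have hstar : ∀ a b : Fin k, star (c a) * c b = ((r ^ 2 : ℝ) : ℂ) := by
      intro a b
      simp [hc, ← Complex.ofReal_mul, sq]
    calc ∑ a : Fin k, ∑ b : Fin k, (star (c a) * c b) * _
        = ((r ^ 2 : ℝ) : ℂ) * ∑ a : Fin k, ∑ b : Fin k,
            (if a = b then (star v ⬝ᵥ MJ C *ᵥ v)
             else if a < b then (star v ⬝ᵥ toC θ *ᵥ v) else (star v ⬝ᵥ toC θᵀ *ᵥ v)) := by
          rw [Finset.mul_sum]
          refine Finset.sum_congr rfl fun a _ => ?_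
          rw [Finset.mul_sum]
          exact Finset.sum_congr rfl fun b _ => by rw [hstar a b]
      _ = _ := by
          rw [sum_ite_count]
          congr 1
          push_cast
          ring
  rw [hD] at hq
  have hre := (Complex.le_def.mp hq).1
  simp only [Complex.add_re, Complex.re_ofReal_mul, Complex.conj_re, Complex.zero_re] at hre
  convert hre using 1 <;> try ring


end Conseq
end GCE

namespace GCE
section Back
variable {m n : ℕ}
variable {A : Matrix (Fin (2 * m)) (Fin (2 * m)) ℝ}
variable {B : Matrix (Fin (2 * m)) (Fin (2 * n)) ℝ}
variable {C θ : Matrix (Fin (2 * n)) (Fin (2 * n)) ℝ}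

lemma Dk_herm (hN : (MJ C).IsHermitian) (hθsym : θᵀ = θ) (k : ℕ) :
    (Dk k C θ).IsHermitian := by
  show (Dk k C θ)ᴴ = Dk k C θ
  ext ⟨a, i⟩ ⟨b, j⟩
  rw [conjTranspose_apply]
  by_cases hab : a = b
  · subst hab
    show star (Dk k C θ (a, j) (a, i)) = Dk k C θ (a, i) (a, j)
    simp only [Dk, if_pos rfl]
    have := congrFun (congrFun hN i) j
    rw [conjTranspose_apply] at this
    exact this
  · show star (Dk k C θ (b, j) (a, i)) = Dk k C θ (a, i) (b, j)
    have hsym : ∀ i' j', θ j' i' = θ i' j' := fun i' j' => by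
      rw [← congrFun (congrFun hθsym j') i', transpose_apply]
    rcases lt_trichotomy a b with h | h | h
    · simp [Dk, (ne_of_lt h).symm, asymm h, hab, h, Complex.star_def, Complex.conj_ofReal]
    · exact absurd h hab
    · simp [Dk, ne_of_lt h, h, (Ne.symm hab), asymm h, Complex.star_def, Complex.conj_ofReal,
        hab]

lemma big_herm (hM : (MJ A).IsHermitian) (hN : (MJ C).IsHermitian) (hθsym : θᵀ = θ) (k : ℕ) :
    (toC (Sext k A B C θ) + (Complex.I / 2) • toC (Jext m n k)).IsHermitian := by
  rw [big_eq]
  show _ = _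
  rw [Matrix.fromBlocks_conjTranspose, conjTranspose_conjTranspose, hM, Dk_herm hN hθsym]

/-- The backward direction : a single symmetric θ certifies every extension. -/
lemma backward (hMpd : (MJ A).PosDef) (hN : (MJ C).IsHermitian) (hθsym : θᵀ = θ)
    (h1 : (MJ C - toC θ).PosSemidef)
    (h2 : (toC θ - (toC B)ᴴ * (MJ A)⁻¹ * toC B).PosSemidef) (k : ℕ) :
    (toC (Sext k A B C θ) + (Complex.I / 2) • toC (Jext m n k)).PosSemidef := by
  haveI : Invertible (MJ A) := hMpd.isUnit.nonempty_invertible.some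
  have hFB2 : (Matrix.fromBlocks (MJ A) (toC B) (toC B)ᴴ (toC θ)).PosSemidef :=
    (Matrix.PosDef.fromBlocks₁₁ (toC B) (toC θ) hMpd).mpr h2
  refine PosSemidef.of_dotProduct_mulVec_nonneg (big_herm hMpd.1 hN hθsym k) fun x => ?_
  rw [qf_split, qf_D_sym C θ hθsym]
  have hfb : ∀ (u : Fin (2 * m) → ℂ) (y : Fin (2 * n) → ℂ),
      star (Sum.elim u y) ⬝ᵥ (Matrix.fromBlocks (MJ A) (toC B) (toC B)ᴴ (toC θ)) *ᵥ
        (Sum.elim u y)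
      = star u ⬝ᵥ MJ A *ᵥ u + star u ⬝ᵥ toC B *ᵥ y + star y ⬝ᵥ (toC B)ᴴ *ᵥ u
        + star y ⬝ᵥ toC θ *ᵥ y := by
    intro u y
    rw [star_elim, fromBlocks_mulVec, sumElim_dotProduct_sumElim, dotProduct_add,
      dotProduct_add]
    simp only [Sum.elim_comp_inl, Sum.elim_comp_inr]
    ring
  have hterm1 : 0 ≤ star (x ∘ Sum.inl) ⬝ᵥ MJ A *ᵥ (x ∘ Sum.inl)
      + star (x ∘ Sum.inl) ⬝ᵥ toC B *ᵥ ysum (x ∘ Sum.inr)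
      + star (ysum (x ∘ Sum.inr)) ⬝ᵥ (toC B)ᴴ *ᵥ (x ∘ Sum.inl)
      + star (ysum (x ∘ Sum.inr)) ⬝ᵥ toC θ *ᵥ ysum (x ∘ Sum.inr) := by
    rw [← hfb]
    exact hFB2.dotProduct_mulVec_nonneg _
  have hterm2 : 0 ≤ ∑ a, star (fun i => (x ∘ Sum.inr) (a, i)) ⬝ᵥ (MJ C - toC θ) *ᵥ
      (fun i => (x ∘ Sum.inr) (a, i)) :=
    Finset.sum_nonneg fun a _ => h1.dotProduct_mulVec_nonneg _
  calc (0 : ℂ) ≤ (star (x ∘ Sum.inl) ⬝ᵥ MJ A *ᵥ (x ∘ Sum.inl)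
      + star (x ∘ Sum.inl) ⬝ᵥ toC B *ᵥ ysum (x ∘ Sum.inr)
      + star (ysum (x ∘ Sum.inr)) ⬝ᵥ (toC B)ᴴ *ᵥ (x ∘ Sum.inl)
      + star (ysum (x ∘ Sum.inr)) ⬝ᵥ toC θ *ᵥ ysum (x ∘ Sum.inr))
      + ∑ a, star (fun i => (x ∘ Sum.inr) (a, i)) ⬝ᵥ (MJ C - toC θ) *ᵥ
          (fun i => (x ∘ Sum.inr) (a, i)) := add_nonneg hterm1 hterm2
    _ = _ := by ring

end Back
end GCE

namespace GCE
section Helpers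
variable {n : ℕ}

lemma reQF (T : Matrix (Fin (2 * n)) (Fin (2 * n)) ℝ) (v : Fin (2 * n) → ℂ) :
    (star v ⬝ᵥ toC T *ᵥ v).re = ∑ i, ∑ j, T i j * (star (v i) * v j).re := by
  simp only [dotProduct, mulVec, Pi.star_apply, toC_apply, Finset.mul_sum]
  rw [Complex.re_sum]
  refine Finset.sum_congr rfl fun i _ => ?_
  rw [Complex.re_sum]
  refine Finset.sum_congr rfl fun j _ => ?_
  rw [show star (v i) * ((T i j : ℂ) * v j) = (T i j : ℂ) * (star (v i) * v j) by ring,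
    Complex.re_ofReal_mul]

lemma real_psd {T : Matrix (Fin (2 * n)) (Fin (2 * n)) ℝ} (h : (toC T).PosSemidef)
    (hsym : Tᵀ = T) : T.PosSemidef := by
  refine PosSemidef.of_dotProduct_mulVec_nonneg ?_ ?_
  · show Tᴴ = T
    ext i j
    rw [conjTranspose_apply, star_trivial]
    conv_lhs => rw [← hsym, transpose_apply]
  · intro x
    have hz := h.dotProduct_mulVec_nonneg (fun i => (x i : ℂ))
    have hcast : star (fun i => (x i : ℂ)) ⬝ᵥ toC T *ᵥ (fun i => (x i : ℂ))
        = ((star x ⬝ᵥ T *ᵥ x : ℝ) : ℂ) := by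
      simp only [dotProduct, mulVec, Pi.star_apply, toC_apply, Complex.star_def,
        Complex.conj_ofReal, star_trivial]
      push_cast
      ring
    rw [hcast] at hz
    exact Complex.zero_le_real.mp hz

end Helpers
end GCE


open GCE Filter Topology

/-- Lemma 1: complete extendability criterion when `A + (i/2)J` and `C + (i/2)J` are
invertible. -/
theorem gaussian_complete_extendability_invertible_iff
    {m n : ℕ} (hm : 1 ≤ m) (hn : 1 ≤ n)
    (A : Matrix (Fin (2 * m)) (Fin (2 * m)) ℝ) (hA : A.IsSymm)
    (C : Matrix (Fin (2 * n)) (Fin (2 * n)) ℝ) (hC : C.IsSymm)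
    (B : Matrix (Fin (2 * m)) (Fin (2 * n)) ℝ)
    (hS : (toC (Matrix.fromBlocks A B Bᵀ C) +
      (Complex.I / 2) • toC (Matrix.fromBlocks (Jmat m) 0 0 (Jmat n))).PosSemidef)
    (hAinv : IsUnit (toC A + (Complex.I / 2) • toC (Jmat m)))
    (hCinv : IsUnit (toC C + (Complex.I / 2) • toC (Jmat n))) :
    (∀ k : ℕ, 1 ≤ k → ∃ θk : Matrix (Fin (2 * n)) (Fin (2 * n)) ℝ,
        (toC (Sext k A B C θk) + (Complex.I / 2) • toC (Jext m n k)).PosSemidef) ↔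
      ∃ θ : Matrix (Fin (2 * n)) (Fin (2 * n)) ℝ, θ.PosSemidef ∧
        (toC C + (Complex.I / 2) • toC (Jmat n) - toC θ).PosSemidef ∧
        (toC θ -
          (toC B)ᵀ * (toC A + (Complex.I / 2) • toC (Jmat m))⁻¹ * toC B).PosSemidef := by
  have hBt : (toC B)ᵀ = (toC B)ᴴ := by rw [toC_transpose, toC_conjTranspose]
  have hSfb : (Matrix.fromBlocks (MJ A) (toC B) (toC B)ᴴ (MJ C)).PosSemidef := by
    rw [← hS_eq]; exact hS
  have hMpsd : (MJ A).PosSemidef := by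
    have h := hSfb.submatrix Sum.inl
    have he : (Matrix.fromBlocks (MJ A) (toC B) (toC B)ᴴ (MJ C)).submatrix Sum.inl Sum.inl
        = MJ A := by ext i j; simp [Matrix.submatrix_apply]
    rwa [he] at h
  have hNpsd : (MJ C).PosSemidef := by
    have h := hSfb.submatrix Sum.inr
    have he : (Matrix.fromBlocks (MJ A) (toC B) (toC B)ᴴ (MJ C)).submatrix Sum.inr Sum.inr
        = MJ C := by ext i j; simp [Matrix.submatrix_apply]
    rwa [he] at h
  have hMpd : (MJ A).PosDef := posDef_of_posSemidef_isUnit hMpsd hAinv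
  haveI : Invertible (MJ A) := hMpd.isUnit.nonempty_invertible.some
  constructor
  · -- forward direction
    intro h
    set F : ℕ → Matrix (Fin (2 * n)) (Fin (2 * n)) ℝ :=
      fun k => Classical.choose (h (k + 2) (by omega)) with hF
    have HF : ∀ k, (toC (Sext (k + 2) A B C (F k)) +
        (Complex.I / 2) • toC (Jext m n (k + 2))).PosSemidef :=
      fun k => Classical.choose_spec (h (k + 2) (by omega))
    set K : ℝ := ∑ i, |C i i| with hK
    have hCK : ∀ i j : Fin (2 * n), (C i i + C j j) / 2 ≤ K := by
      intro i j
      have h1 : C i i ≤ K := le_trans (le_abs_self _)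
        (Finset.single_le_sum (f := fun l => |C l l|) (fun l _ => abs_nonneg _)
          (Finset.mem_univ i))
      have h2 : C j j ≤ K := le_trans (le_abs_self _)
        (Finset.single_le_sum (f := fun l => |C l l|) (fun l _ => abs_nonneg _)
          (Finset.mem_univ j))
      linarith
    have hmem : ∀ k, (fun i j => F k i j) ∈ Set.pi Set.univ
        (fun _ : Fin (2 * n) => Set.pi Set.univ fun _ : Fin (2 * n) => Set.Icc (-K) K) := by
      intro k
      simp only [Set.mem_pi, Set.mem_univ, Set.mem_Icc, true_implies]
      intro i j
      have h01 : (0 : Fin (k + 2)) < 1 := by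
        rw [Fin.lt_def, Fin.val_one]
        norm_num
      have hb := entry_bound (HF k) h01 i j
      have := abs_le.mp (hb.trans (hCK i j))
      exact ⟨this.1, this.2⟩
    obtain ⟨L, -, φ, hφ, hconv⟩ :=
      ((isCompact_univ_pi fun _ : Fin (2 * n) =>
        isCompact_univ_pi fun _ : Fin (2 * n) => isCompact_Icc).tendsto_subseq hmem)
    have hent : ∀ i j, Tendsto (fun k => F (φ k) i j) atTop (𝓝 (L i j)) := by
      intro i j
      exact tendsto_pi_nhds.mp (tendsto_pi_nhds.mp hconv i) j
    set θ : Matrix (Fin (2 * n)) (Fin (2 * n)) ℝ :=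
      Matrix.of (fun i j => (L i j + L j i) / 2) with hθ
    have hθsym : θᵀ = θ := by
      ext i j
      show θ j i = θ i j
      simp only [hθ, Matrix.of_apply]
      ring
    have ht1 : ∀ v, Tendsto (fun k => (star v ⬝ᵥ toC (F (φ k)) *ᵥ v).re) atTop
        (𝓝 ((star v ⬝ᵥ toC (Matrix.of L) *ᵥ v).re)) := by
      intro v
      simp only [reQF, Matrix.of_apply]
      exact tendsto_finset_sum _ fun i _ => tendsto_finset_sum _ fun j _ =>
        ((hent i j).mul_const _)
    have ht2 : ∀ v, Tendsto (fun k => (star v ⬝ᵥ toC (F (φ k))ᵀ *ᵥ v).re) atTop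
        (𝓝 ((star v ⬝ᵥ toC (Matrix.of L)ᵀ *ᵥ v).re)) := by
      intro v
      simp only [reQF, Matrix.transpose_apply, Matrix.of_apply]
      exact tendsto_finset_sum _ fun i _ => tendsto_finset_sum _ fun j _ =>
        ((hent j i).mul_const _)
    have hqθ : ∀ v, (star v ⬝ᵥ toC θ *ᵥ v).re
        = ((star v ⬝ᵥ toC (Matrix.of L) *ᵥ v).re
          + (star v ⬝ᵥ toC (Matrix.of L)ᵀ *ᵥ v).re) / 2 := by
      intro v
      simp only [reQF, Matrix.transpose_apply, Matrix.of_apply, hθ]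
      rw [← Finset.sum_add_distrib, Finset.sum_div]
      refine Finset.sum_congr rfl fun i _ => ?_
      rw [← Finset.sum_add_distrib, Finset.sum_div]
      refine Finset.sum_congr rfl fun j _ => ?_
      ring
    have hub : ∀ v, (star v ⬝ᵥ toC θ *ᵥ v).re ≤ (star v ⬝ᵥ MJ C *ᵥ v).re := by
      intro v
      have hA1 : ∀ k, (star v ⬝ᵥ toC (F (φ k)) *ᵥ v).re
          + (star v ⬝ᵥ toC (F (φ k))ᵀ *ᵥ v).re ≤ 2 * (star v ⬝ᵥ MJ C *ᵥ v).re :=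
        fun k => twocopy (HF (φ k)) (by omega) v
      have hlim := le_of_tendsto ((ht1 v).add (ht2 v)) (Filter.Eventually.of_forall hA1)
      rw [hqθ v]
      linarith
    have hlb : ∀ (u : Fin (2 * m) → ℂ) (v : Fin (2 * n) → ℂ),
        0 ≤ (star u ⬝ᵥ MJ A *ᵥ u).re + (star u ⬝ᵥ toC B *ᵥ v).re
          + (star u ⬝ᵥ toC B *ᵥ v).re + (star v ⬝ᵥ toC θ *ᵥ v).re := by
      intro u v
      have hεt : Tendsto (fun k => ((φ k : ℝ) + 2)⁻¹) atTop (𝓝 0) := by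
        have h1 : Tendsto (fun j : ℕ => (j : ℝ) + 2) atTop atTop :=
          Filter.tendsto_atTop_add_const_right _ 2 tendsto_natCast_atTop_atTop
        have := (h1.comp hφ.tendsto_atTop).inv_tendsto_atTop
        exact this
      have hA2 : ∀ k, 0 ≤ (star u ⬝ᵥ MJ A *ᵥ u).re
          + (star u ⬝ᵥ toC B *ᵥ v).re + (star u ⬝ᵥ toC B *ᵥ v).re
          + ((φ k : ℝ) + 2)⁻¹ * (star v ⬝ᵥ MJ C *ᵥ v).re
          + ((1 - ((φ k : ℝ) + 2)⁻¹) / 2) * ((star v ⬝ᵥ toC (F (φ k)) *ᵥ v).re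
            + (star v ⬝ᵥ toC (F (φ k))ᵀ *ᵥ v).re) := by
        intro k
        have hcon := constc (HF (φ k)) u v (((φ k : ℝ) + 2)⁻¹)
        have hne : ((φ k : ℝ) + 2) ≠ 0 := by positivity
        have hcast : ((φ k + 2 : ℕ) : ℝ) = (φ k : ℝ) + 2 := by push_cast; ring
        rw [hcast] at hcon
        have heq : (star u ⬝ᵥ MJ A *ᵥ u).re
            + (((φ k : ℝ) + 2) * ((φ k : ℝ) + 2)⁻¹) * (star u ⬝ᵥ toC B *ᵥ v).re
            + (((φ k : ℝ) + 2) * ((φ k : ℝ) + 2)⁻¹) * (star u ⬝ᵥ toC B *ᵥ v).re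
            + (((φ k : ℝ) + 2)⁻¹) ^ 2 * (((φ k : ℝ) + 2) * (star v ⬝ᵥ MJ C *ᵥ v).re
              + ((((φ k : ℝ) + 2) ^ 2 - ((φ k : ℝ) + 2)) / 2) *
                ((star v ⬝ᵥ toC (F (φ k)) *ᵥ v).re + (star v ⬝ᵥ toC (F (φ k))ᵀ *ᵥ v).re))
            = (star u ⬝ᵥ MJ A *ᵥ u).re
            + (star u ⬝ᵥ toC B *ᵥ v).re + (star u ⬝ᵥ toC B *ᵥ v).re
            + ((φ k : ℝ) + 2)⁻¹ * (star v ⬝ᵥ MJ C *ᵥ v).re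
            + ((1 - ((φ k : ℝ) + 2)⁻¹) / 2) * ((star v ⬝ᵥ toC (F (φ k)) *ᵥ v).re
              + (star v ⬝ᵥ toC (F (φ k))ᵀ *ᵥ v).re) := by
          field_simp
          ring
        rw [heq] at hcon
        exact hcon
      have hlim : Tendsto (fun k => (star u ⬝ᵥ MJ A *ᵥ u).re
          + (star u ⬝ᵥ toC B *ᵥ v).re + (star u ⬝ᵥ toC B *ᵥ v).re
          + ((φ k : ℝ) + 2)⁻¹ * (star v ⬝ᵥ MJ C *ᵥ v).re
          + ((1 - ((φ k : ℝ) + 2)⁻¹) / 2) * ((star v ⬝ᵥ toC (F (φ k)) *ᵥ v).re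
            + (star v ⬝ᵥ toC (F (φ k))ᵀ *ᵥ v).re)) atTop
          (𝓝 ((star u ⬝ᵥ MJ A *ᵥ u).re
            + (star u ⬝ᵥ toC B *ᵥ v).re + (star u ⬝ᵥ toC B *ᵥ v).re
            + 0 * (star v ⬝ᵥ MJ C *ᵥ v).re
            + ((1 - 0) / 2) * ((star v ⬝ᵥ toC (Matrix.of L) *ᵥ v).re
              + (star v ⬝ᵥ toC (Matrix.of L)ᵀ *ᵥ v).re))) :=
        (tendsto_const_nhds.add (hεt.mul_const _)).add
          (((tendsto_const_nhds.sub hεt).div_const 2).mul ((ht1 v).add (ht2 v)))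
      have hfin := ge_of_tendsto' hlim hA2
      rw [hqθ v]
      linarith
    -- assemble conclusions
    have hθCherm : (toC θ).IsHermitian := by
      show (toC θ)ᴴ = toC θ
      rw [toC_conjTranspose, hθsym]
    have h1' : (MJ C - toC θ).PosSemidef := by
      refine posSemidef_of_re_nonneg (hNpsd.1.sub hθCherm) fun v => ?_
      rw [Matrix.sub_mulVec, dotProduct_sub, Complex.sub_re]
      have := hub v
      linarith
    have hFBherm : (Matrix.fromBlocks (MJ A) (toC B) (toC B)ᴴ (toC θ)).IsHermitian := by
      show _ = _
      rw [Matrix.fromBlocks_conjTranspose, conjTranspose_conjTranspose, hMpd.1, hθCherm]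
    have hFBpsd : (Matrix.fromBlocks (MJ A) (toC B) (toC B)ᴴ (toC θ)).PosSemidef := by
      refine posSemidef_of_re_nonneg hFBherm fun x => ?_
      have hexp : star x ⬝ᵥ (Matrix.fromBlocks (MJ A) (toC B) (toC B)ᴴ (toC θ)) *ᵥ x
          = star (x ∘ Sum.inl) ⬝ᵥ MJ A *ᵥ (x ∘ Sum.inl)
            + star (x ∘ Sum.inl) ⬝ᵥ toC B *ᵥ (x ∘ Sum.inr)
            + star (x ∘ Sum.inr) ⬝ᵥ (toC B)ᴴ *ᵥ (x ∘ Sum.inl)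
            + star (x ∘ Sum.inr) ⬝ᵥ toC θ *ᵥ (x ∘ Sum.inr) := by
        conv_lhs => rw [← Sum.elim_comp_inl_inr x]
        rw [star_elim, fromBlocks_mulVec, sumElim_dotProduct_sumElim, dotProduct_add,
          dotProduct_add]
        simp only [Sum.elim_comp_inl, Sum.elim_comp_inr]
        ring
      rw [hexp, conj_qf (toC B) (x ∘ Sum.inl) (x ∘ Sum.inr)]
      simp only [Complex.add_re, Complex.conj_re]
      exact hlb (x ∘ Sum.inl) (x ∘ Sum.inr)
    have h2' : (toC θ - (toC B)ᴴ * (MJ A)⁻¹ * toC B).PosSemidef :=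
      (Matrix.PosDef.fromBlocks₁₁ (toC B) (toC θ) hMpd).mp hFBpsd
    have hGpsd : ((toC B)ᴴ * (MJ A)⁻¹ * toC B).PosSemidef :=
      (hMpd.inv.posSemidef).conjTranspose_mul_mul_same (toC B)
    have hθCpsd : (toC θ).PosSemidef := by
      have := h2'.add hGpsd
      simpa using this
    refine ⟨θ, real_psd hθCpsd hθsym, h1', ?_⟩
    rw [hBt]
    exact h2'
  · -- backward direction
    rintro ⟨θ, hθpsd, h1, h2⟩ k hk
    have hθsym : θᵀ = θ := by
      have hh := hθpsd.1
      ext i j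
      rw [Matrix.transpose_apply, ← congrFun (congrFun hh i) j, Matrix.conjTranspose_apply,
        star_trivial]
    rw [hBt] at h2
    exact ⟨θ, backward hMpd hNpsd.1 hθsym h1 h2 k⟩
end
end

section
/- Let m, n ≥ 1 and k ≥ 2. Let A be a real symmetric 2m×2m matrix such that M := A + (i/2)J_{2m} is positive semidefinite and invertible, let C be a real symmetric 2n×2n matrix, B a real 2m×2n matrix, and θ a real symmetric 2n×2n matrix. Then S_k(A,B,C,θ) + (i/2)(J_{2m} ⊕ (I_k ⊗ J_{2n})) is positive semidefinite if and only if both C − θ + (i/2)J_{2n} and C + (k−1)θ + (i/2)J_{2n} − k Bᵀ M⁻¹ B are positive semidefinite complex matrices. -/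
open Matrix Complex
open scoped Kronecker ComplexOrder

noncomputable section

set_option linter.unusedSectionVars false

variable {N : Type*} [Fintype N] [DecidableEq N]

lemma cmul_nonneg' {a b : ℂ} (ha : 0 ≤ a) (hb : 0 ≤ b) : 0 ≤ a * b := by
  rw [Complex.le_def] at *
  simp only [Complex.mul_re, Complex.mul_im, Complex.zero_re, Complex.zero_im] at *
  constructor <;> nlinarith [ha.1, ha.2, hb.1, hb.2]

lemma nonneg_of_natmul {j : ℕ} (hj : 0 < j) {b : ℂ} (h : 0 ≤ (j : ℂ) * b) : 0 ≤ b := by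
  rw [Complex.le_def] at *
  simp only [Complex.mul_re, Complex.mul_im, Complex.zero_re, Complex.zero_im,
    Complex.natCast_re, Complex.natCast_im] at *
  have hj' : (0:ℝ) < j := by exact_mod_cast hj
  constructor <;> nlinarith [h.1, h.2]

lemma mulVec_K (k : ℕ) (P Q : Matrix N N ℂ) (x : Fin k × N → ℂ) :
    ((Matrix.of fun p q : Fin k × N =>
        (if p.1 = q.1 then P p.2 q.2 else 0) + Q p.2 q.2) *ᵥ x)
    = fun p => (P *ᵥ (fun i => x (p.1, i))) p.2
        + (Q *ᵥ (fun i => ∑ a, x (a, i))) p.2 := by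
  funext p
  simp only [mulVec, dotProduct, Matrix.of_apply, Fintype.sum_prod_type, add_mul, ite_mul,
    zero_mul, Finset.sum_add_distrib]
  congr 1
  · rw [Finset.sum_comm]
    simp
  · rw [Finset.sum_comm]
    exact Finset.sum_congr rfl fun j _ => (Finset.mul_sum _ _ _).symm

lemma quad_formula (k : ℕ) (P Q : Matrix N N ℂ) (x : Fin k × N → ℂ) :
    star x ⬝ᵥ ((Matrix.of fun p q : Fin k × N =>
        (if p.1 = q.1 then P p.2 q.2 else 0) + Q p.2 q.2) *ᵥ x)
    = (∑ a, star (fun i => x (a,i)) ⬝ᵥ P *ᵥ (fun i => x (a,i)))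
      + star (fun i => ∑ a, x (a,i)) ⬝ᵥ Q *ᵥ (fun i => ∑ a, x (a,i)) := by
  rw [mulVec_K]
  simp only [dotProduct, Pi.star_apply, Fintype.sum_prod_type, mul_add,
    Finset.sum_add_distrib]
  congr 1
  rw [Finset.sum_comm]
  refine Finset.sum_congr rfl fun i _ => ?_
  rw [← Finset.sum_mul]
  simp [map_sum]

lemma K_posSemidef_iff {k : ℕ} (hk : 2 ≤ k) {P Q : Matrix N N ℂ}
    (hP : P.IsHermitian) (hQ : Q.IsHermitian) :
    (Matrix.of fun p q : Fin k × N =>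
        (if p.1 = q.1 then P p.2 q.2 else 0) + Q p.2 q.2).PosSemidef
    ↔ P.PosSemidef ∧ (P + (k : ℂ) • Q).PosSemidef := by
  have hk0 : (k : ℂ) ≠ 0 := by positivity
  have hR : (P + (k : ℂ) • Q).IsHermitian := by
    refine hP.add ?_
    unfold Matrix.IsHermitian
    rw [conjTranspose_smul, hQ.eq]
    simp
  have expandR : ∀ s : N → ℂ, star s ⬝ᵥ (P + (k : ℂ) • Q) *ᵥ s
      = star s ⬝ᵥ P *ᵥ s + (k : ℂ) * (star s ⬝ᵥ Q *ᵥ s) := by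
    intro s
    simp [Matrix.add_mulVec, Matrix.smul_mulVec, dotProduct_add, dotProduct_smul,
      smul_eq_mul]
  have KHerm : (Matrix.of fun p q : Fin k × N =>
      (if p.1 = q.1 then P p.2 q.2 else 0) + Q p.2 q.2).IsHermitian := by
    show _ᴴ = _
    ext p q
    simp only [conjTranspose_apply, Matrix.of_apply, star_add]
    by_cases hpq : p.1 = q.1 <;> simp [hpq, eq_comm, hP.apply, hQ.apply]
  constructor
  · intro hK
    set a0 : Fin k := ⟨0, by omega⟩
    set a1 : Fin k := ⟨1, by omega⟩
    have ha01 : a0 ≠ a1 := by simp [a0, a1]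
    constructor
    · refine PosSemidef.of_dotProduct_mulVec_nonneg hP fun v => ?_
      have h := hK.dotProduct_mulVec_nonneg (fun p : Fin k × N =>
        if p.1 = a0 then v p.2 else if p.1 = a1 then - v p.2 else 0)
      rw [quad_formula] at h
      have e1 : ∀ a : Fin k,
          (star (fun i => if (a, i).1 = a0 then v (a, i).2
              else if (a, i).1 = a1 then - v (a, i).2 else 0) ⬝ᵥ
            P *ᵥ (fun i => if (a, i).1 = a0 then v (a, i).2
              else if (a, i).1 = a1 then - v (a, i).2 else 0))
          = (if a = a0 then (star v ⬝ᵥ P *ᵥ v) else 0)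
            + (if a = a1 then (star v ⬝ᵥ P *ᵥ v) else 0) := by
        intro a
        by_cases h0 : a = a0
        · subst h0
          have hfv : (fun i => if (a0, i).1 = a0 then v (a0, i).2
              else if (a0, i).1 = a1 then - v (a0, i).2 else 0) = v := by
            funext i; simp
          rw [hfv]
          simp [ha01]
        · by_cases h1 : a = a1
          · subst h1
            have hfv : (fun i => if (a1, i).1 = a0 then v (a1, i).2
                else if (a1, i).1 = a1 then - v (a1, i).2 else 0) = -v := by
              funext i; simp [Ne.symm ha01]
            rw [hfv]
            simp [h0, Matrix.mulVec_neg]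
          · have hfv : (fun i => if (a, i).1 = a0 then v (a, i).2
                else if (a, i).1 = a1 then - v (a, i).2 else 0) = 0 := by
              funext i; simp [h0, h1]
            rw [hfv]
            simp [h0, h1]
      have e2 : (fun i => ∑ a : Fin k, if (a, i).1 = a0 then v (a, i).2
          else if (a, i).1 = a1 then - v (a, i).2 else 0) = (0 : N → ℂ) := by
        funext i
        have e : ∀ a : Fin k, (if (a, i).1 = a0 then v (a, i).2
            else if (a, i).1 = a1 then - v (a, i).2 else 0)
            = (if a = a0 then v i else 0) + (if a = a1 then - v i else 0) := by
          intro a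
          by_cases h0 : a = a0 <;> by_cases h1 : a = a1 <;>
            simp_all [Ne.symm ha01]
        simp only [e, Finset.sum_add_distrib, Finset.sum_ite_eq', Finset.mem_univ, if_true]
        simp
      rw [e2] at h
      simp only [e1, Finset.sum_add_distrib, Finset.sum_ite_eq', Finset.mem_univ,
        if_true, Matrix.mulVec_zero, dotProduct_zero, add_zero] at h
      refine nonneg_of_natmul (j := 2) (by norm_num) ?_
      rw [show ((2:ℕ):ℂ) = 2 by norm_num, two_mul]
      exact h
    · refine PosSemidef.of_dotProduct_mulVec_nonneg hR fun v => ?_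
      have h := hK.dotProduct_mulVec_nonneg (fun p : Fin k × N => v p.2)
      rw [quad_formula] at h
      have e2 : (fun i => ∑ _a : Fin k, v i) = (k : ℂ) • v := by
        funext i
        simp [Finset.sum_const, mul_comm]
      rw [show (fun i => ∑ a : Fin k, (fun p : Fin k × N => v p.2) (a, i))
          = (fun i => ∑ _a : Fin k, v i) from rfl, e2] at h
      simp only [Finset.sum_const, Finset.card_univ, Fintype.card_fin, nsmul_eq_mul,
        star_smul, smul_dotProduct, Matrix.mulVec_smul, dotProduct_smul, smul_eq_mul,
        star_natCast] at h
      refine nonneg_of_natmul (j := k) (by omega) ?_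
      rw [expandR]
      have heq : (k:ℂ) * (star v ⬝ᵥ P *ᵥ v + (k:ℂ) * (star v ⬝ᵥ Q *ᵥ v))
          = (k:ℂ) * (star v ⬝ᵥ P *ᵥ v) + (k:ℂ) * ((k:ℂ) * (star v ⬝ᵥ Q *ᵥ v)) := by ring
      rw [heq]
      exact h
  · rintro ⟨hPp, hRp⟩
    refine PosSemidef.of_dotProduct_mulVec_nonneg KHerm fun x => ?_
    rw [quad_formula]
    set s : N → ℂ := fun i => ∑ a, x (a, i) with hs
    set z : Fin k → N → ℂ := fun a i => x (a, i) - (k:ℂ)⁻¹ * s i with hz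
    have hzsum : ∀ i, (∑ a, z a i) = 0 := by
      intro i
      simp only [hz, Finset.sum_sub_distrib, Finset.sum_const, Finset.card_univ,
        Fintype.card_fin, nsmul_eq_mul, ← hs]
      field_simp
      exact sub_self _
    have hcc : star ((k:ℂ)⁻¹) = (k:ℂ)⁻¹ := by simp
    have key : ∀ a : Fin k, (star (fun i => x (a, i)) ⬝ᵥ P *ᵥ (fun i => x (a, i)))
        = star (z a) ⬝ᵥ P *ᵥ (z a) + (k:ℂ)⁻¹ * (star (z a) ⬝ᵥ P *ᵥ s)
          + (k:ℂ)⁻¹ * (star s ⬝ᵥ P *ᵥ (z a))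
          + ((k:ℂ)⁻¹ * (k:ℂ)⁻¹) * (star s ⬝ᵥ P *ᵥ s) := by
      intro a
      have hx : (fun i => x (a, i)) = z a + (k:ℂ)⁻¹ • s := by
        funext i
        simp [hz]
      rw [hx]
      simp only [star_add, star_smul, add_dotProduct, smul_dotProduct,
        Matrix.mulVec_add, Matrix.mulVec_smul, dotProduct_add, dotProduct_smul,
        smul_eq_mul, hcc]
      ring
    have h1 : (∑ a, star (z a) ⬝ᵥ P *ᵥ s) = 0 := by
      simp only [dotProduct, Pi.star_apply]
      rw [Finset.sum_comm]
      refine Finset.sum_eq_zero fun i _ => ?_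
      rw [← Finset.sum_mul, ← star_sum, hzsum i]
      simp
    have h2 : (∑ a, star s ⬝ᵥ P *ᵥ (z a)) = 0 := by
      simp only [dotProduct, mulVec, Pi.star_apply]
      rw [Finset.sum_comm]
      refine Finset.sum_eq_zero fun i _ => ?_
      rw [← Finset.mul_sum]
      have : (∑ a, (fun j => P i j) ⬝ᵥ z a) = 0 := by
        simp only [dotProduct]
        rw [Finset.sum_comm]
        refine Finset.sum_eq_zero fun j _ => ?_
        rw [← Finset.mul_sum, hzsum j, mul_zero]
      simp only [dotProduct] at this
      rw [this, mul_zero]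
    have main : (∑ a, star (fun i => x (a, i)) ⬝ᵥ P *ᵥ (fun i => x (a, i)))
        + star s ⬝ᵥ Q *ᵥ s
        = (∑ a, star (z a) ⬝ᵥ P *ᵥ (z a)) + (k:ℂ)⁻¹ * (star s ⬝ᵥ (P + (k:ℂ) • Q) *ᵥ s) := by
      rw [Finset.sum_congr rfl (fun a _ => key a)]
      simp only [Finset.sum_add_distrib, ← Finset.mul_sum, h1, h2, mul_zero,
        Finset.sum_const, Finset.card_univ, Fintype.card_fin, nsmul_eq_mul, expandR]
      field_simp
      ring
    rw [main]
    have hcnn : (0:ℂ) ≤ (k:ℂ)⁻¹ := by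
      rw [show ((k:ℂ))⁻¹ = (((k:ℝ)⁻¹ : ℝ) : ℂ) by push_cast; ring]
      rw [Complex.zero_le_real]
      positivity
    exact add_nonneg (Finset.sum_nonneg fun a _ => hPp.dotProduct_mulVec_nonneg _)
      (cmul_nonneg' hcnn (hRp.dotProduct_mulVec_nonneg _))

lemma toC_transpose {p q : Type*} (M : Matrix p q ℝ) : (toC M)ᵀ = toC Mᵀ := rfl

lemma conjTranspose_toC {p q : Type*} (M : Matrix p q ℝ) : (toC M)ᴴ = toC Mᵀ := by
  ext i j
  simp [toC, conjTranspose_apply, Complex.conj_ofReal]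

lemma Jmat_antisymm (n : ℕ) : (Jmat n)ᵀ = - Jmat n := by
  ext i j
  simp only [transpose_apply, Jmat, Matrix.neg_apply]
  split_ifs with h1 h2 h3 h4 <;> first
    | rfl
    | simp
    | omega

lemma herm_aux {n : ℕ} {S : Matrix (Fin (2*n)) (Fin (2*n)) ℝ} (hS : S.IsSymm) :
    (toC S + (Complex.I / 2) • toC (Jmat n)).IsHermitian := by
  unfold Matrix.IsHermitian
  rw [conjTranspose_add, conjTranspose_smul, conjTranspose_toC, conjTranspose_toC,
    hS.eq, Jmat_antisymm]
  congr 1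
  have : toC (-(Jmat n)) = - toC (Jmat n) := by
    ext i j
    simp [toC]
  rw [this, smul_neg, ← neg_smul]
  congr 1
  rw [Complex.star_def, map_div₀, Complex.conj_I]
  simp [Complex.conj_ofNat]
  ring

lemma posDef_of_posSemidef_isUnit {n : Type*} [Fintype n] [DecidableEq n]
    {M : Matrix n n ℂ} (h : M.PosSemidef) (hu : IsUnit M) : M.PosDef := by
  refine PosDef.of_dotProduct_mulVec_pos h.1 fun x hx => lt_of_le_of_ne (h.dotProduct_mulVec_nonneg x) ?_
  intro h0
  apply hx
  have h1 : M *ᵥ x = 0 := (h.dotProduct_mulVec_zero_iff x).1 h0.symm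
  have h2 := Matrix.mulVec_injective_iff_isUnit.mpr hu
  have := h2 (by rw [h1, Matrix.mulVec_zero] : M *ᵥ x = M *ᵥ 0)
  exact this

/-- Positivity of the `k`-extension `S_k + (i/2)J'` reduces to two `2n × 2n` conditions. -/
theorem Sext_posSemidef_iff
    {m n : ℕ} (hm : 1 ≤ m) (hn : 1 ≤ n) {k : ℕ} (hk : 2 ≤ k)
    (A : Matrix (Fin (2 * m)) (Fin (2 * m)) ℝ) (hA : A.IsSymm)
    (hM : (toC A + (Complex.I / 2) • toC (Jmat m)).PosSemidef)
    (hMinv : IsUnit (toC A + (Complex.I / 2) • toC (Jmat m)))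
    (C : Matrix (Fin (2 * n)) (Fin (2 * n)) ℝ) (hC : C.IsSymm)
    (B : Matrix (Fin (2 * m)) (Fin (2 * n)) ℝ)
    (θ : Matrix (Fin (2 * n)) (Fin (2 * n)) ℝ) (hθ : θ.IsSymm) :
    (toC (Sext k A B C θ) + (Complex.I / 2) • toC (Jext m n k)).PosSemidef ↔
      (toC C - toC θ + (Complex.I / 2) • toC (Jmat n)).PosSemidef ∧
      (toC C + ((k : ℂ) - 1) • toC θ + (Complex.I / 2) • toC (Jmat n) -
        (k : ℂ) •
          ((toC B)ᵀ * (toC A + (Complex.I / 2) • toC (Jmat m))⁻¹ * toC B)).PosSemidef := by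

  set Mc := toC A + (Complex.I / 2) • toC (Jmat m) with hMc
  set G := (toC B)ᵀ * Mc⁻¹ * toC B with hG
  set P := toC C - toC θ + (Complex.I / 2) • toC (Jmat n) with hPdef
  set Q := toC θ - G with hQdef
  have hMcPD : Mc.PosDef := posDef_of_posSemidef_isUnit hM hMinv
  haveI : Invertible Mc := hMinv.invertible
  set X : Matrix (Fin (2*m)) (Fin k × Fin (2*n)) ℂ :=
    Matrix.of fun i p => toC B i p.2 with hX
  set D : Matrix (Fin k × Fin (2*n)) (Fin k × Fin (2*n)) ℂ :=
    Matrix.of fun p q =>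
      if p.1 = q.1 then (toC C + (Complex.I/2) • toC (Jmat n)) p.2 q.2
      else toC θ p.2 q.2 with hD
  have claim1 : toC (Sext k A B C θ) + (Complex.I / 2) • toC (Jext m n k)
      = Matrix.fromBlocks Mc X Xᴴ D := by
    ext p q
    cases p with
    | inl i =>
      cases q with
      | inl j =>
        simp [Sext, Jext, toC, Mc]
      | inr bj =>
        obtain ⟨b, j⟩ := bj
        simp [Sext, Jext, toC, X]
    | inr ai =>
      obtain ⟨a, i⟩ := ai
      cases q with
      | inl j =>
        simp [Sext, Jext, toC, X, conjTranspose_apply, Complex.conj_ofReal]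
      | inr bj =>
        obtain ⟨b, j⟩ := bj
        by_cases hab : a = b
        · simp [Sext, Jext, toC, D, hab, Matrix.one_apply]
        · by_cases hab' : a < b
          · simp [Sext, Jext, toC, D, hab, hab', Matrix.one_apply]
          · simp [Sext, Jext, toC, D, hab, hab', Matrix.one_apply, hθ.apply]
  have hXX : Xᴴ * Mc⁻¹ * X = Matrix.of fun p q : Fin k × Fin (2*n) => G p.2 q.2 := by
    ext p q
    simp [Matrix.mul_apply, conjTranspose_apply, Matrix.of_apply, hG, hX, toC,
      Complex.conj_ofReal, transpose_apply]
  have claim2 : D - Xᴴ * Mc⁻¹ * X = Matrix.of fun p q : Fin k × Fin (2*n) =>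
      (if p.1 = q.1 then P p.2 q.2 else 0) + Q p.2 q.2 := by
    rw [hXX]
    ext p q
    by_cases hpq : p.1 = q.1 <;>
      simp [D, P, Q, hpq, toC, Matrix.sub_apply, Matrix.add_apply, Matrix.smul_apply] <;> ring
  have hPH : P.IsHermitian := by
    have : P = toC (C - θ) + (Complex.I / 2) • toC (Jmat n) := by
      rw [hPdef]
      congr 1
      ext i j
      simp [toC]
    rw [this]
    exact herm_aux (hC.sub hθ)
  have hGH : G.IsHermitian := by
    have h1 : (toC B)ᴴ = (toC B)ᵀ := by
      ext i j
      simp [toC, conjTranspose_apply, Complex.conj_ofReal]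
    have h2 : ((toC B)ᵀ)ᴴ = toC B := by
      ext i j
      simp [toC, conjTranspose_apply, Complex.conj_ofReal]
    have h3 : (Mc⁻¹)ᴴ = Mc⁻¹ := by
      rw [Matrix.conjTranspose_nonsing_inv, hM.1.eq]
    show Gᴴ = G
    rw [hG, conjTranspose_mul, conjTranspose_mul, h1, h2, h3, Matrix.mul_assoc]
  have hQH : Q.IsHermitian := by
    show Qᴴ = Q
    rw [hQdef, conjTranspose_sub, hGH.eq]
    congr 1
    ext i j
    simp [toC, conjTranspose_apply, Complex.conj_ofReal, hθ.apply]
  have hRfinal : P + (k : ℂ) • Q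
      = toC C + ((k : ℂ) - 1) • toC θ + (Complex.I / 2) • toC (Jmat n) - (k : ℂ) • G := by
    rw [hPdef, hQdef]
    ext i j
    simp [Matrix.sub_apply, Matrix.add_apply, Matrix.smul_apply, smul_eq_mul]
    ring
  rw [claim1, Matrix.PosDef.fromBlocks₁₁ X D hMcPD, claim2,
    K_posSemidef_iff hk hPH hQH, hRfinal]
end
end

section
/- Let n, s ≥ 1, let A be a real symmetric 2n×2n matrix and B a real 2n×2s matrix such that the block matrix X = [[A, B],[Bᵀ, (1/2)I_{2s}]] satisfies X + (i/2)J_{2(n+s)} ≥ 0 (i.e., X is a Gaussian covariance matrix one of whose marginals is the pure-state covariance (1/2)I_{2s}). Then B = 0. -/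
open Matrix Complex
open scoped Kronecker ComplexOrder

noncomputable section

/-- Proposition 1: if a Gaussian covariance matrix has a pure marginal `(1/2)I`, then the
off-diagonal block vanishes. -/
theorem offdiag_block_eq_zero_of_pure_marginal
    {n s : ℕ} (hn : 1 ≤ n) (hs : 1 ≤ s)
    (A : Matrix (Fin (2 * n)) (Fin (2 * n)) ℝ) (hA : A.IsSymm)
    (B : Matrix (Fin (2 * n)) (Fin (2 * s)) ℝ)
    (hX : (toC (Matrix.fromBlocks A B Bᵀ ((1 / 2 : ℝ) • 1)) +
      (Complex.I / 2) • toC (Matrix.fromBlocks (Jmat n) 0 0 (Jmat s))).PosSemidef) :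
    B = 0 := by
  ext i j
  have key : ∀ a b : Fin (2 * s), a.val + 1 = b.val → a.val % 2 = 0 →
      B i a = 0 ∧ B i b = 0 := by
    intro a b hab1 hab2
    set M : Matrix (Fin (2 * n) ⊕ Fin (2 * s)) (Fin (2 * n) ⊕ Fin (2 * s)) ℂ :=
      toC (Matrix.fromBlocks A B Bᵀ ((1 / 2 : ℝ) • 1)) +
        (Complex.I / 2) • toC (Matrix.fromBlocks (Jmat n) 0 0 (Jmat s)) with hM
    set x : (Fin (2 * n) ⊕ Fin (2 * s)) → ℂ :=
      Pi.single (Sum.inr a) 1 + Pi.single (Sum.inr b) Complex.I with hx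
    have hab : a ≠ b := by
      intro h
      have := congrArg Fin.val h
      omega
    have hMx : M *ᵥ x = fun y => M y (Sum.inr a) + M y (Sum.inr b) * Complex.I := by
      rw [hx, mulVec_add, mulVec_single, mulVec_single]
      funext y
      simp
      ring
    have hJaa : Jmat s a a = 0 := by
      simp only [Jmat]
      rw [if_neg (by omega), if_neg (by omega)]
    have hJab : Jmat s a b = 1 := by
      simp only [Jmat]
      rw [if_pos ⟨hab1, hab2⟩]
    have hJba : Jmat s b a = -1 := by
      simp only [Jmat]
      rw [if_neg (by omega), if_pos ⟨hab1, hab2⟩]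
    have hJbb : Jmat s b b = 0 := by
      simp only [Jmat]
      rw [if_neg (by omega), if_neg (by omega)]
    have hright : ∀ w : Fin (2 * s), (M *ᵥ x) (Sum.inr w) = 0 := by
      intro w
      rw [hMx]
      simp only [hM, Matrix.add_apply, Matrix.smul_apply, toC, Matrix.map_apply,
        Matrix.fromBlocks_apply₂₂, smul_eq_mul]
      by_cases hwa : w = a
      · subst hwa
        rw [Matrix.one_apply_eq, Matrix.one_apply_ne hab, hJaa, hJab]
        push_cast
        linear_combination (1 / 2 : ℂ) * Complex.I_mul_I
      · by_cases hwb : w = b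
        · subst hwb
          rw [Matrix.one_apply_ne (Ne.symm hab), Matrix.one_apply_eq, hJba, hJbb]
          push_cast
          ring
        · have hwa' : w.val ≠ a.val := fun h => hwa (Fin.ext h)
          have hwb' : w.val ≠ b.val := fun h => hwb (Fin.ext h)
          have hJwa : Jmat s w a = 0 := by
            simp only [Jmat]
            rw [if_neg (by omega), if_neg (by omega)]
          have hJwb : Jmat s w b = 0 := by
            simp only [Jmat]
            rw [if_neg (by omega), if_neg (by omega)]
          rw [Matrix.one_apply_ne hwa, Matrix.one_apply_ne hwb, hJwa, hJwb]
          push_cast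
          ring
    have hdot : star x ⬝ᵥ M *ᵥ x = 0 := by
      rw [dotProduct]
      apply Finset.sum_eq_zero
      intro y _
      rcases y with yl | yr
      · have hxy : x (Sum.inl yl) = 0 := by
          simp [hx, Pi.single_apply]
        simp [hxy]
      · rw [hright yr]
        simp
    have hMx0 : M *ᵥ x = 0 := (hX.dotProduct_mulVec_zero_iff x).mp hdot
    have hrow : (M *ᵥ x) (Sum.inl i) = 0 := by rw [hMx0]; rfl
    rw [hMx] at hrow
    simp only [hM, Matrix.add_apply, Matrix.smul_apply, toC, Matrix.map_apply,
      Matrix.fromBlocks_apply₁₂, Matrix.zero_apply, smul_eq_mul, Complex.ofReal_zero,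
      mul_zero, add_zero] at hrow
    have hre := congrArg Complex.re hrow
    have him := congrArg Complex.im hrow
    simp [Complex.add_re, Complex.add_im, Complex.mul_re, Complex.mul_im] at hre him
    exact ⟨hre, him⟩
  rcases Nat.even_or_odd j.val with ⟨k, hkk⟩ | ⟨k, hkk⟩
  · have hk : 2 * k + 1 < 2 * s := by omega
    have h0 := (key j ⟨2 * k + 1, hk⟩ (show j.val + 1 = 2 * k + 1 by omega)
      (by omega)).1
    simpa using h0
  · have hk : 2 * k < 2 * s := by omega
    have h0 := (key ⟨2 * k, hk⟩ j (show 2 * k + 1 = j.val by omega)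
      (show 2 * k % 2 = 0 by omega)).2
    simpa using h0
end
end

section
/- Let E be a real symmetric positive semidefinite 2m×2m matrix, G a real symmetric 2n×2n matrix, F a real 2n×2m matrix such that the real block matrix [[E, Fᵀ],[F, G]] is positive semidefinite, and let φ be a real symmetric 2n×2n matrix. Then the k-extension S_k(E, Fᵀ, G, φ) is positive semidefinite (as a real symmetric matrix) for every integer k ≥ 1 if and only if G − φ is positive semidefinite and the real block matrix [[E, Fᵀ],[F, φ]] is positive semidefinite. (Equivalently, by Schur complements, if and only if G ≥ φ ≥ F E⁻ Fᵀ with (·)⁻ the Moore–Penrose inverse.) -/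
open Matrix Complex
open scoped Kronecker ComplexOrder

noncomputable section

/-- Quadratic-form decomposition of the `k`-extension. -/
lemma sext_quad {m n : ℕ} (E : Matrix (Fin (2*m)) (Fin (2*m)) ℝ)
    (G φ : Matrix (Fin (2*n)) (Fin (2*n)) ℝ)
    (F : Matrix (Fin (2*n)) (Fin (2*m)) ℝ) (hφ : φ.IsSymm) (k : ℕ)
    (v : Fin (2*m) ⊕ Fin k × Fin (2*n) → ℝ) :
    v ⬝ᵥ (Sext k E Fᵀ G φ) *ᵥ v =
      (Sum.elim (fun i => v (Sum.inl i)) (fun i => ∑ a, v (Sum.inr (a, i)))) ⬝ᵥ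
        (Matrix.fromBlocks E Fᵀ F φ) *ᵥ
        (Sum.elim (fun i => v (Sum.inl i)) (fun i => ∑ a, v (Sum.inr (a, i)))) +
      ∑ a : Fin k, (fun i => v (Sum.inr (a,i))) ⬝ᵥ (G - φ) *ᵥ (fun i => v (Sum.inr (a,i))) := by
  have hkey : ∀ (a b : Fin k) (i j : Fin (2*n)),
      (if a = b then G i j else if a < b then φ i j else φ j i)
        = (if a = b then G i j - φ i j else 0) + φ i j := by
    intro a b i j
    rcases eq_or_ne a b with h | h
    · simp [h]
    · have : φ j i = φ i j := by rw [← hφ.apply i j]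
      rcases lt_or_gt_of_ne h with hl | hl <;> simp [h, hl, this, not_lt_of_gt]
  simp only [dotProduct, mulVec, Sext, fromBlocks, Matrix.sub_apply,
    Fintype.sum_sum_type, Fintype.sum_prod_type, Sum.elim_inl, Sum.elim_inr,
    of_apply, transpose_apply]
  simp only [hkey]
  simp only [Finset.mul_sum, Finset.sum_mul, mul_add, add_mul,
    Finset.sum_add_distrib, sub_mul, mul_sub, Finset.sum_sub_distrib,
    mul_ite, ite_mul, mul_zero, zero_mul, Finset.sum_ite_eq, Finset.mem_univ, if_true]
  have e2 : ∑ x : Fin (2*m), ∑ x1 : Fin k, ∑ x2 : Fin (2*n),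
        v (Sum.inl x) * (F x2 x * v (Sum.inr (x1, x2)))
      = ∑ x : Fin (2*m), ∑ x1 : Fin (2*n), ∑ x2 : Fin k,
        v (Sum.inl x) * (F x1 x * v (Sum.inr (x2, x1))) :=
    Finset.sum_congr rfl fun x _ => Finset.sum_comm
  have e3 : ∑ x : Fin k, ∑ x1 : Fin (2*n), ∑ x2 : Fin (2*m),
        v (Sum.inr (x, x1)) * (F x1 x2 * v (Sum.inl x2))
      = ∑ x1 : Fin (2*n), ∑ x2 : Fin (2*m), ∑ x : Fin k,
        v (Sum.inr (x, x1)) * (F x1 x2 * v (Sum.inl x2)) := by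
    rw [Finset.sum_comm]
    exact Finset.sum_congr rfl fun _ _ => Finset.sum_comm
  have e4 : ∑ x : Fin k, ∑ x1 : Fin (2*n), ∑ x2 : Fin k, ∑ x3 : Fin (2*n),
        (if x = x2 then
          v (Sum.inr (x, x1)) * (G x1 x3 * v (Sum.inr (x2, x3))) -
            v (Sum.inr (x, x1)) * (φ x1 x3 * v (Sum.inr (x2, x3)))
        else 0)
      = (∑ x : Fin k, ∑ x1 : Fin (2*n), ∑ x2 : Fin (2*n),
          v (Sum.inr (x, x1)) * (G x1 x2 * v (Sum.inr (x, x2)))) -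
        ∑ x : Fin k, ∑ x1 : Fin (2*n), ∑ x2 : Fin (2*n),
          v (Sum.inr (x, x1)) * (φ x1 x2 * v (Sum.inr (x, x2))) := by
    rw [← Finset.sum_sub_distrib]
    refine Finset.sum_congr rfl fun x _ => ?_
    rw [← Finset.sum_sub_distrib]
    refine Finset.sum_congr rfl fun x1 _ => ?_
    rw [Finset.sum_comm, ← Finset.sum_sub_distrib]
    refine Finset.sum_congr rfl fun x3 _ => ?_
    simp
  have e5 : ∑ x : Fin k, ∑ x1 : Fin (2*n), ∑ x2 : Fin k, ∑ x3 : Fin (2*n),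
        v (Sum.inr (x, x1)) * (φ x1 x3 * v (Sum.inr (x2, x3)))
      = ∑ x : Fin (2*n), ∑ x1 : Fin (2*n), ∑ x2 : Fin k, ∑ x3 : Fin k,
        v (Sum.inr (x3, x)) * (φ x x1 * v (Sum.inr (x2, x1))) := by
    rw [Finset.sum_comm]
    refine Finset.sum_congr rfl fun i _ => ?_
    rw [show (∑ a : Fin k, ∑ b : Fin k, ∑ j : Fin (2*n),
          v (Sum.inr (a, i)) * (φ i j * v (Sum.inr (b, j))))
        = ∑ a : Fin k, ∑ j : Fin (2*n), ∑ b : Fin k,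
          v (Sum.inr (a, i)) * (φ i j * v (Sum.inr (b, j))) from
      Finset.sum_congr rfl fun _ _ => Finset.sum_comm]
    rw [Finset.sum_comm]
    exact Finset.sum_congr rfl fun _ _ => Finset.sum_comm
  rw [e2, e3, e4, e5]
  ring

lemma sext_isHermitian {m n : ℕ} (E : Matrix (Fin (2*m)) (Fin (2*m)) ℝ)
    (G φ : Matrix (Fin (2*n)) (Fin (2*n)) ℝ)
    (F : Matrix (Fin (2*n)) (Fin (2*m)) ℝ) (hE : E.IsSymm) (hG : G.IsSymm)
    (hφ : φ.IsSymm) (k : ℕ) : (Sext k E Fᵀ G φ).IsHermitian := by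
  rw [Matrix.IsHermitian, Matrix.conjTranspose_eq_transpose_of_trivial]
  ext x y
  rcases x with i | ⟨a, i⟩ <;> rcases y with j | ⟨b, j⟩
  · show E j i = E i j
    exact hE.apply i j
  · rfl
  · rfl
  · show (if b = a then G j i else if b < a then φ j i else φ i j)
        = (if a = b then G i j else if a < b then φ i j else φ j i)
    have hG' : G j i = G i j := hG.apply i j
    have hφ' : φ j i = φ i j := hφ.apply i j
    rcases eq_or_ne a b with h | h
    · simp [h, hG']
    · rcases lt_or_gt_of_ne h with hl | hl <;>
        simp [h, h.symm, hl, hl.not_gt, not_lt_of_gt hl, hφ']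

/-- Real-matrix extension criterion used in Theorem 2: the `k`-extension
`S_k(E,Fᵀ,G,φ)` is positive semidefinite for every `k ≥ 1` iff `G - φ ≥ 0` and
`[[E,Fᵀ],[F,φ]] ≥ 0`. -/
theorem real_Sext_posSemidef_forall_iff
    {m n : ℕ} (E : Matrix (Fin (2 * m)) (Fin (2 * m)) ℝ) (hE : E.PosSemidef)
    (G : Matrix (Fin (2 * n)) (Fin (2 * n)) ℝ) (hG : G.IsSymm)
    (F : Matrix (Fin (2 * n)) (Fin (2 * m)) ℝ)
    (hEFG : (Matrix.fromBlocks E Fᵀ F G).PosSemidef)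
    (φ : Matrix (Fin (2 * n)) (Fin (2 * n)) ℝ) (hφ : φ.IsSymm) :
    (∀ k : ℕ, 1 ≤ k → (Sext k E Fᵀ G φ).PosSemidef) ↔
      (G - φ).PosSemidef ∧ (Matrix.fromBlocks E Fᵀ F φ).PosSemidef := by
  have hEsymm : E.IsSymm := by
    rw [Matrix.IsSymm, ← Matrix.conjTranspose_eq_transpose_of_trivial]; exact hE.1
  constructor
  · intro h
    -- Step 1: G - φ is PSD, using k = 2.
    have hGφ : (G - φ).PosSemidef := by
      refine Matrix.PosSemidef.of_dotProduct_mulVec_nonneg ?_ ?_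
      · rw [Matrix.IsHermitian, Matrix.conjTranspose_eq_transpose_of_trivial]
        exact hG.sub hφ
      · intro x
        rw [star_trivial]
        set w : Fin 2 × Fin (2*n) → ℝ := fun p => if p.1 = 0 then x p.2 else -(x p.2) with hw
        have h2 := (h 2 one_le_two).dotProduct_mulVec_nonneg (Sum.elim 0 w)
        rw [star_trivial, sext_quad E G φ F hφ] at h2
        have hs : (fun i => ∑ a : Fin 2, (Sum.elim (0 : Fin (2*m) → ℝ) w) (Sum.inr (a, i)))
            = (0 : Fin (2*n) → ℝ) := by
          funext i
          simp [hw, Fin.sum_univ_two]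
        rw [hs] at h2
        have hz : (Sum.elim
              (fun i => (Sum.elim (0 : Fin (2*m) → ℝ) w) (Sum.inl i))
              (0 : Fin (2*n) → ℝ)) = (0 : Fin (2*m) ⊕ Fin (2*n) → ℝ) := by
          funext z; rcases z with z | z <;> simp
        rw [hz, zero_dotProduct] at h2
        simp only [Fin.sum_univ_two, Sum.elim_inr] at h2
        have hv0 : (fun i => w ((0 : Fin 2), i)) = x := by funext i; simp [hw]
        have hv1 : (fun i => w ((1 : Fin 2), i)) = -x := by
          funext i; simp [hw, Fin.one_eq_zero_iff]
        rw [hv0, hv1, Matrix.mulVec_neg, neg_dotProduct, dotProduct_neg,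
          neg_neg] at h2
        linarith
    refine ⟨hGφ, Matrix.PosSemidef.of_dotProduct_mulVec_nonneg ?_ ?_⟩
    -- Hermitian part of [[E, Fᵀ],[F, φ]]
    · rw [Matrix.IsHermitian, Matrix.conjTranspose_eq_transpose_of_trivial]
      ext z w
      rcases z with i | i <;> rcases w with j | j <;>
        simp only [Matrix.transpose_apply, Matrix.fromBlocks_apply₁₁,
          Matrix.fromBlocks_apply₁₂, Matrix.fromBlocks_apply₂₁, Matrix.fromBlocks_apply₂₂]
      · rw [← hEsymm.apply i j]
      · rw [← hφ.apply i j]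
    -- quadratic form part
    · intro y
      rw [star_trivial]
      set t : ℝ := y ⬝ᵥ (Matrix.fromBlocks E Fᵀ F φ) *ᵥ y with ht
      set c : ℝ := (fun i => y (Sum.inr i)) ⬝ᵥ (G - φ) *ᵥ (fun i => y (Sum.inr i)) with hc
      have hc0 : 0 ≤ c := by
        have := hGφ.dotProduct_mulVec_nonneg (fun i => y (Sum.inr i)); rwa [star_trivial] at this
      have key : ∀ k : ℕ, 1 ≤ k → 0 ≤ t + c / (k : ℝ) := by
        intro k hk
        have hk0 : (0 : ℝ) < (k : ℝ) := by exact_mod_cast hk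
        have h1 := (h k hk).dotProduct_mulVec_nonneg
          (Sum.elim (fun i => y (Sum.inl i)) (fun p => (1 / (k : ℝ)) * y (Sum.inr p.2)))
        rw [star_trivial, sext_quad E G φ F hφ] at h1
        have hs : (fun i => ∑ a : Fin k,
            (Sum.elim (fun i => y (Sum.inl i))
              (fun p : Fin k × Fin (2*n) => (1 / (k : ℝ)) * y (Sum.inr p.2)) (Sum.inr (a, i))))
            = fun i => y (Sum.inr i) := by
          funext i
          simp only [Sum.elim_inr, Finset.sum_const, Finset.card_univ, Fintype.card_fin,
            nsmul_eq_mul]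
          field_simp
        rw [hs] at h1
        have hy : (Sum.elim (fun i =>
            Sum.elim (fun i => y (Sum.inl i))
              (fun p : Fin k × Fin (2*n) => (1 / (k : ℝ)) * y (Sum.inr p.2)) (Sum.inl i))
            (fun i => y (Sum.inr i))) = y := by
          funext z; rcases z with z | z <;> simp
        rw [hy] at h1
        have hsum : (∑ a : Fin k, (fun i =>
            Sum.elim (fun i => y (Sum.inl i))
              (fun p : Fin k × Fin (2*n) => (1 / (k : ℝ)) * y (Sum.inr p.2)) (Sum.inr (a, i)))
              ⬝ᵥ (G - φ) *ᵥ (fun i =>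
            Sum.elim (fun i => y (Sum.inl i))
              (fun p : Fin k × Fin (2*n) => (1 / (k : ℝ)) * y (Sum.inr p.2)) (Sum.inr (a, i))))
            = c / (k : ℝ) := by
          have hv : ∀ a : Fin k, (fun i =>
              Sum.elim (fun i => y (Sum.inl i))
                (fun p : Fin k × Fin (2*n) => (1 / (k : ℝ)) * y (Sum.inr p.2)) (Sum.inr (a, i)))
              = (1 / (k : ℝ)) • (fun i => y (Sum.inr i)) := by
            intro a; funext i; simp
          simp only [hv]
          rw [Finset.sum_const, Finset.card_univ, Fintype.card_fin]
          rw [Matrix.mulVec_smul, dotProduct_smul, smul_dotProduct]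
          simp only [smul_eq_mul, ← hc]
          field_simp
          ring_nf
          rw [inv_pow, mul_comm, ← mul_assoc, inv_mul_cancel₀ (pow_ne_zero 2 hk0.ne'), one_mul]
        rw [hsum] at h1
        exact h1
      have hlim : Filter.Tendsto (fun k : ℕ => t + c / (k : ℝ)) Filter.atTop (nhds t) := by
        have := tendsto_const_div_atTop_nhds_zero_nat c
        simpa using Filter.Tendsto.const_add t this
      refine ge_of_tendsto hlim ?_
      filter_upwards [Filter.eventually_ge_atTop 1] with k hk using key k hk
  · rintro ⟨hGφ, hP⟩ k hk
    refine Matrix.PosSemidef.of_dotProduct_mulVec_nonneg (sext_isHermitian E G φ F hEsymm hG hφ k) ?_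
    intro v
    rw [star_trivial, sext_quad E G φ F hφ]
    have h1 := hP.dotProduct_mulVec_nonneg (Sum.elim (fun i => v (Sum.inl i)) (fun i => ∑ a, v (Sum.inr (a, i))))
    rw [star_trivial] at h1
    refine add_nonneg h1 (Finset.sum_nonneg fun a _ => ?_)
    have := hGφ.dotProduct_mulVec_nonneg (fun i => v (Sum.inr (a, i)))
    rwa [star_trivial] at this
end
end

section
/- Let m, n ≥ 1 and let S = [[A, B],[Bᵀ, C]] be a covariance matrix (A real symmetric 2m×2m, C real symmetric 2n×2n, B real 2m×2n, S + (i/2)J_{2(m+n)} ≥ 0). If S is separable, i.e., there exist real symmetric matrices X (2m×2m) and Y (2n×2n) with X + (i/2)J_{2m} ≥ 0, Y + (i/2)J_{2n} ≥ 0 and S − (X ⊕ Y) positive semidefinite as a real matrix, then there exists a single real symmetric positive semidefinite 2n×2n matrix θ such that for every integer k ≥ 1 the matrix S_k(A,B,C,θ) + (i/2)(J_{2m} ⊕ (I_k ⊗ J_{2n})) is positive semidefinite; in particular, S is completely extendable. -/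
open Matrix Complex
open scoped Kronecker ComplexOrder

noncomputable section

open scoped MatrixOrder in
lemma psd_eq_conjTranspose_mul_self {𝕜 n : Type*} [RCLike 𝕜] [Fintype n] [DecidableEq n]
    {M : Matrix n n 𝕜} (h : M.PosSemidef) : ∃ B : Matrix n n 𝕜, M = Bᴴ * B :=
  CStarAlgebra.nonneg_iff_eq_star_mul_self.mp h.nonneg

lemma toC_psd {p : Type*} [Fintype p] [DecidableEq p] {M : Matrix p p ℝ}
    (h : M.PosSemidef) : (toC M).PosSemidef := by
  obtain ⟨R, rfl⟩ := psd_eq_conjTranspose_mul_self h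
  have : toC (Rᴴ * R) = (toC R)ᴴ * toC R := by
    ext i j
    simp [toC, Matrix.mul_apply, Matrix.conjTranspose_apply]
  rw [this]
  exact Matrix.posSemidef_conjTranspose_mul_self _

lemma fromBlocks_psd {p q : Type*} [Fintype p] [DecidableEq p] [Fintype q] [DecidableEq q]
    {M : Matrix p p ℂ} {N : Matrix q q ℂ} (hM : M.PosSemidef) (hN : N.PosSemidef) :
    (Matrix.fromBlocks M 0 0 N).PosSemidef := by
  obtain ⟨P, rfl⟩ := psd_eq_conjTranspose_mul_self hM
  obtain ⟨Q, rfl⟩ := psd_eq_conjTranspose_mul_self hN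
  have : Matrix.fromBlocks (Pᴴ * P) 0 0 (Qᴴ * Q) =
      (Matrix.fromBlocks P 0 0 Q)ᴴ * Matrix.fromBlocks P 0 0 Q := by
    simp [Matrix.fromBlocks_conjTranspose, Matrix.fromBlocks_multiply]
  rw [this]
  exact Matrix.posSemidef_conjTranspose_mul_self _

lemma blockDiag_psd {k p : Type*} [Fintype k] [DecidableEq k] [Fintype p] [DecidableEq p]
    {M : Matrix p p ℂ} (hM : M.PosSemidef) :
    (Matrix.blockDiagonal (fun _ : k => M)).PosSemidef := by
  obtain ⟨R, rfl⟩ := psd_eq_conjTranspose_mul_self hM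
  have : Matrix.blockDiagonal (fun _ : k => Rᴴ * R) =
      (Matrix.blockDiagonal (fun _ : k => R))ᴴ * Matrix.blockDiagonal (fun _ : k => R) := by
    simp
  rw [this]
  exact Matrix.posSemidef_conjTranspose_mul_self _

/-- Theorem 2: every separable Gaussian covariance matrix is completely extendable, with a
single real symmetric positive semidefinite extension matrix `θ` working for all `k`. -/
theorem separable_implies_completely_extendable
    {m n : ℕ} (hm : 1 ≤ m) (hn : 1 ≤ n)
    (A : Matrix (Fin (2 * m)) (Fin (2 * m)) ℝ) (hA : A.IsSymm)
    (C : Matrix (Fin (2 * n)) (Fin (2 * n)) ℝ) (hC : C.IsSymm)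
    (B : Matrix (Fin (2 * m)) (Fin (2 * n)) ℝ)
    (hS : (toC (Matrix.fromBlocks A B Bᵀ C) +
      (Complex.I / 2) • toC (Matrix.fromBlocks (Jmat m) 0 0 (Jmat n))).PosSemidef)
    (hsep : ∃ (X : Matrix (Fin (2 * m)) (Fin (2 * m)) ℝ)
        (Y : Matrix (Fin (2 * n)) (Fin (2 * n)) ℝ), X.IsSymm ∧ Y.IsSymm ∧
        (toC X + (Complex.I / 2) • toC (Jmat m)).PosSemidef ∧
        (toC Y + (Complex.I / 2) • toC (Jmat n)).PosSemidef ∧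
        (Matrix.fromBlocks A B Bᵀ C - Matrix.fromBlocks X 0 0 Y).PosSemidef) :
    ∃ θ : Matrix (Fin (2 * n)) (Fin (2 * n)) ℝ, θ.PosSemidef ∧
      ∀ k : ℕ, 1 ≤ k →
        (toC (Sext k A B C θ) + (Complex.I / 2) • toC (Jext m n k)).PosSemidef := by
  obtain ⟨X, Y, hXs, hYs, hXJ, hYJ, hP⟩ := hsep
  set P : Matrix (Fin (2 * m) ⊕ Fin (2 * n)) (Fin (2 * m) ⊕ Fin (2 * n)) ℝ :=
    Matrix.fromBlocks A B Bᵀ C - Matrix.fromBlocks X 0 0 Y with hPdef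
  refine ⟨C - Y, ?_, ?_⟩
  · have h1 : C - Y = P.submatrix Sum.inr Sum.inr := by
      ext i j
      simp [hPdef, Matrix.submatrix_apply, Matrix.sub_apply]
    rw [h1]
    exact hP.submatrix _
  · intro k hk
    set π : (Fin (2 * m) ⊕ Fin k × Fin (2 * n)) → (Fin (2 * m) ⊕ Fin (2 * n)) :=
      Sum.map id Prod.snd with hπ
    set M₁ := toC X + (Complex.I / 2) • toC (Jmat m) with hM₁
    set M₂ := toC Y + (Complex.I / 2) • toC (Jmat n) with hM₂
    set Q : Matrix (Fin k × Fin (2 * n)) (Fin k × Fin (2 * n)) ℂ :=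
      (Matrix.blockDiagonal (fun _ : Fin k => M₂)).submatrix Prod.swap Prod.swap with hQ
    have key : toC (Sext k A B C (C - Y)) + (Complex.I / 2) • toC (Jext m n k) =
        (toC P).submatrix π π + Matrix.fromBlocks M₁ 0 0 Q := by
      ext x y
      rcases x with i | ⟨a, i⟩ <;> rcases y with j | ⟨b, j⟩
      · simp [toC, Sext, Jext, hPdef, hM₁, hπ, Matrix.sub_apply]
        push_cast
        ring
      · simp [toC, Sext, Jext, hPdef, hπ, Matrix.sub_apply]
      · simp [toC, Sext, Jext, hPdef, hπ, Matrix.sub_apply]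
      · simp only [toC, Sext, Jext, hPdef, hπ, Matrix.map_apply, Matrix.add_apply,
          Matrix.smul_apply, Matrix.fromBlocks_apply₂₂, Matrix.sub_apply,
          Matrix.submatrix_apply, Sum.map_inr, Matrix.kroneckerMap_apply,
          Matrix.one_apply, hQ, Matrix.blockDiagonal_apply, Prod.swap_prod_mk, hM₂,
          smul_eq_mul]
        by_cases hab : a = b
        · rw [if_pos hab, if_pos hab, if_pos hab]
          push_cast
          ring
        · rcases lt_or_gt_of_ne hab with hlt | hgt
          · rw [if_neg hab, if_neg hab, if_neg hab, if_pos hlt]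
            push_cast
            ring
          · have hnl : ¬ a < b := not_lt_of_gt hgt
            rw [if_neg hab, if_neg hab, if_neg hab, if_neg hnl, hC.apply i j, hYs.apply i j]
            push_cast
            ring
    rw [key]
    exact ((toC_psd hP).submatrix π).add
      (fromBlocks_psd hXJ ((blockDiag_psd hYJ).submatrix Prod.swap))
end
end

section
/- Let m, n ≥ 1 and let A (real symmetric 2m×2m), C (real symmetric 2n×2n) and B (real 2m×2n) be given. Suppose that for every integer k ≥ 1 there exists a real 2n×2n matrix θ_k such that S_k(A,B,C,θ_k) + (i/2)(J_{2m} ⊕ (I_k ⊗ J_{2n})) is positive semidefinite. Then there exists a single real 2n×2n matrix θ such that for every integer k ≥ 1 the matrix S_k(A,B,C,θ) + (i/2)(J_{2m} ⊕ (I_k ⊗ J_{2n})) is positive semidefinite. -/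
open Matrix Complex
open scoped Kronecker ComplexOrder

noncomputable section

-- restriction lemma
lemma restrict_psd {m n : ℕ} {k k' : ℕ} (h : k ≤ k')
    (A : Matrix (Fin (2 * m)) (Fin (2 * m)) ℝ)
    (B : Matrix (Fin (2 * m)) (Fin (2 * n)) ℝ)
    (C θ : Matrix (Fin (2 * n)) (Fin (2 * n)) ℝ)
    (H : (toC (Sext k' A B C θ) + (Complex.I / 2) • toC (Jext m n k')).PosSemidef) :
    (toC (Sext k A B C θ) + (Complex.I / 2) • toC (Jext m n k)).PosSemidef := by
  have hcast : ∀ a b : Fin k, (Fin.castLE h a < Fin.castLE h b) ↔ a < b := by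
    intro a b; exact Iff.rfl
  let f : (Fin (2 * m) ⊕ Fin k × Fin (2 * n)) → (Fin (2 * m) ⊕ Fin k' × Fin (2 * n)) :=
    Sum.map id (Prod.map (Fin.castLE h) id)
  have key : (toC (Sext k' A B C θ) + (Complex.I / 2) • toC (Jext m n k')).submatrix f f
      = toC (Sext k A B C θ) + (Complex.I / 2) • toC (Jext m n k) := by
    ext x y
    have hS : Sext k' A B C θ (f x) (f y) = Sext k A B C θ x y := by
      rcases x with i | ⟨a, i⟩ <;> rcases y with j | ⟨b, j⟩ <;>
        simp [Sext, f, hcast]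
    have hJ : Jext m n k' (f x) (f y) = Jext m n k x y := by
      rcases x with i | ⟨a, i⟩ <;> rcases y with j | ⟨b, j⟩ <;>
        simp [Jext, f, Matrix.one_apply]
    simp [toC, hS, hJ]
  rw [← key]
  exact H.submatrix f

lemma Jmat_diag (n : ℕ) (i : Fin (2 * n)) : Jmat n i i = 0 := by
  simp [Jmat]

lemma theta_bound {m n : ℕ}
    (A : Matrix (Fin (2 * m)) (Fin (2 * m)) ℝ)
    (B : Matrix (Fin (2 * m)) (Fin (2 * n)) ℝ)
    (C θ : Matrix (Fin (2 * n)) (Fin (2 * n)) ℝ)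
    (H : (toC (Sext 2 A B C θ) + (Complex.I / 2) • toC (Jext m n 2)).PosSemidef)
    (i j : Fin (2 * n)) : |θ i j| ≤ (C i i + C j j) / 2 := by
  set M := toC (Sext 2 A B C θ) + (Complex.I / 2) • toC (Jext m n 2) with hM
  have e00 : M (Sum.inr ((0 : Fin 2), i)) (Sum.inr ((0 : Fin 2), i)) = ((C i i : ℝ) : ℂ) := by
    simp [hM, toC, Sext, Jext, Jmat_diag, Matrix.one_apply]
  have e11 : M (Sum.inr ((1 : Fin 2), j)) (Sum.inr ((1 : Fin 2), j)) = ((C j j : ℝ) : ℂ) := by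
    simp [hM, toC, Sext, Jext, Jmat_diag, Matrix.one_apply]
  have e01 : M (Sum.inr ((0 : Fin 2), i)) (Sum.inr ((1 : Fin 2), j)) = ((θ i j : ℝ) : ℂ) := by
    simp [hM, toC, Sext, Jext, Matrix.one_apply, Fin.ext_iff, Fin.lt_def]
  have e10 : M (Sum.inr ((1 : Fin 2), j)) (Sum.inr ((0 : Fin 2), i)) = ((θ i j : ℝ) : ℂ) := by
    simp [hM, toC, Sext, Jext, Matrix.one_apply, Fin.ext_iff, Fin.lt_def]
  have key : ∀ ε : ℝ, 0 ≤ C i i + ε * θ i j + ε * θ i j + ε * ε * C j j := by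
    intro ε
    have hsub := (H.submatrix ![Sum.inr ((0 : Fin 2), i), Sum.inr ((1 : Fin 2), j)]).dotProduct_mulVec_nonneg
      ![1, (ε : ℂ)]
    rw [show star ![(1 : ℂ), (ε : ℂ)] ⬝ᵥ
        (M.submatrix ![Sum.inr ((0 : Fin 2), i), Sum.inr ((1 : Fin 2), j)]
          ![Sum.inr ((0 : Fin 2), i), Sum.inr ((1 : Fin 2), j)]) *ᵥ ![1, (ε : ℂ)]
        = ((C i i + ε * θ i j + ε * θ i j + ε * ε * C j j : ℝ) : ℂ) from ?_] at hsub
    · exact (Complex.zero_le_real).mp hsub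
    · simp only [dotProduct, Matrix.mulVec, Fin.sum_univ_two, Matrix.submatrix_apply,
        Matrix.cons_val_zero, Matrix.cons_val_one, Matrix.head_cons, Pi.star_apply,
        e00, e01, e10, e11, star_one, _root_.map_one, Complex.star_def, Complex.conj_ofReal]
      push_cast
      ring
  have h1 := key 1
  have h2 := key (-1)
  rw [abs_le]
  constructor <;> nlinarith [h1, h2]

lemma entry_continuous {m n k : ℕ}
    (A : Matrix (Fin (2 * m)) (Fin (2 * m)) ℝ)
    (B : Matrix (Fin (2 * m)) (Fin (2 * n)) ℝ)
    (C : Matrix (Fin (2 * n)) (Fin (2 * n)) ℝ)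
    (x y : Fin (2 * m) ⊕ Fin k × Fin (2 * n)) :
    Continuous fun θ : Matrix (Fin (2 * n)) (Fin (2 * n)) ℝ =>
      (toC (Sext k A B C θ) + (Complex.I / 2) • toC (Jext m n k)) x y := by
  have hS : Continuous fun θ : Matrix (Fin (2 * n)) (Fin (2 * n)) ℝ => Sext k A B C θ x y := by
    rcases x with i | ⟨a, i⟩ <;> rcases y with j | ⟨b, j⟩
    · exact continuous_const
    · exact continuous_const
    · exact continuous_const
    · show Continuous fun θ : Matrix (Fin (2 * n)) (Fin (2 * n)) ℝ =>
        (if a = b then C i j else if a < b then θ i j else θ j i)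
      split_ifs
      · exact continuous_const
      · exact continuous_id.matrix_elem i j
      · exact continuous_id.matrix_elem j i
  have : (fun θ : Matrix (Fin (2 * n)) (Fin (2 * n)) ℝ =>
      (toC (Sext k A B C θ) + (Complex.I / 2) • toC (Jext m n k)) x y)
      = fun θ => ((Sext k A B C θ x y : ℝ) : ℂ)
        + (Complex.I / 2) * ((Jext m n k x y : ℝ) : ℂ) := by
    funext θ; simp [toC]
  rw [this]
  exact ((Complex.continuous_ofReal.comp hS).add continuous_const)

lemma closed_T {m n k : ℕ}
    (A : Matrix (Fin (2 * m)) (Fin (2 * m)) ℝ)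
    (B : Matrix (Fin (2 * m)) (Fin (2 * n)) ℝ)
    (C : Matrix (Fin (2 * n)) (Fin (2 * n)) ℝ) :
    IsClosed {θ : Matrix (Fin (2 * n)) (Fin (2 * n)) ℝ |
      (toC (Sext k A B C θ) + (Complex.I / 2) • toC (Jext m n k)).PosSemidef} := by
  have hzle : IsClosed {z : ℂ | 0 ≤ z} := by
    have : {z : ℂ | 0 ≤ z} = Complex.re ⁻¹' Set.Ici 0 ∩ Complex.im ⁻¹' {0} := by
      ext z; simp [Complex.le_def, eq_comm]
    rw [this]
    exact (isClosed_Ici.preimage Complex.continuous_re).inter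
      (isClosed_singleton.preimage Complex.continuous_im)
  have hset : {θ : Matrix (Fin (2 * n)) (Fin (2 * n)) ℝ |
      (toC (Sext k A B C θ) + (Complex.I / 2) • toC (Jext m n k)).PosSemidef}
      = (⋂ (x) (y), {θ : Matrix (Fin (2 * n)) (Fin (2 * n)) ℝ |
          star ((toC (Sext k A B C θ) + (Complex.I / 2) • toC (Jext m n k)) y x)
            = (toC (Sext k A B C θ) + (Complex.I / 2) • toC (Jext m n k)) x y})
        ∩ ⋂ (v : (Fin (2 * m) ⊕ Fin k × Fin (2 * n)) → ℂ),
          {θ | 0 ≤ star v ⬝ᵥ (toC (Sext k A B C θ) + (Complex.I / 2) • toC (Jext m n k)) *ᵥ v} := by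
    ext θ
    simp only [Set.mem_setOf_eq, Set.mem_inter_iff, Set.mem_iInter, Matrix.posSemidef_iff_dotProduct_mulVec,
      Matrix.IsHermitian, ← Matrix.ext_iff, Matrix.conjTranspose_apply]

  rw [hset]
  refine IsClosed.inter (isClosed_iInter fun x => isClosed_iInter fun y =>
      isClosed_eq ?_ (entry_continuous A B C x y)) (isClosed_iInter fun v => ?_)
  · exact continuous_star.comp (entry_continuous A B C y x)
  · have hq : Continuous fun θ : Matrix (Fin (2 * n)) (Fin (2 * n)) ℝ =>
        star v ⬝ᵥ (toC (Sext k A B C θ) + (Complex.I / 2) • toC (Jext m n k)) *ᵥ v := by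
      have : (fun θ : Matrix (Fin (2 * n)) (Fin (2 * n)) ℝ =>
          star v ⬝ᵥ (toC (Sext k A B C θ) + (Complex.I / 2) • toC (Jext m n k)) *ᵥ v)
          = fun θ => ∑ x, star (v x) *
              ∑ y, (toC (Sext k A B C θ) + (Complex.I / 2) • toC (Jext m n k)) x y * v y := by
        funext θ; simp [dotProduct, Matrix.mulVec]
      rw [this]
      exact continuous_finset_sum _ fun x _ => continuous_const.mul
        (continuous_finset_sum _ fun y _ => (entry_continuous A B C x y).mul continuous_const)
    exact hzle.preimage hq


/-- If for every `k ≥ 1` some extension matrix `θ_k` works, then a single `θ` works for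
all `k` simultaneously. -/
theorem exists_uniform_extension_matrix
    {m n : ℕ} (hm : 1 ≤ m) (hn : 1 ≤ n)
    (A : Matrix (Fin (2 * m)) (Fin (2 * m)) ℝ) (hA : A.IsSymm)
    (C : Matrix (Fin (2 * n)) (Fin (2 * n)) ℝ) (hC : C.IsSymm)
    (B : Matrix (Fin (2 * m)) (Fin (2 * n)) ℝ)
    (hext : ∀ k : ℕ, 1 ≤ k → ∃ θk : Matrix (Fin (2 * n)) (Fin (2 * n)) ℝ,
      (toC (Sext k A B C θk) + (Complex.I / 2) • toC (Jext m n k)).PosSemidef) :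
    ∃ θ : Matrix (Fin (2 * n)) (Fin (2 * n)) ℝ, ∀ k : ℕ, 1 ≤ k →
      (toC (Sext k A B C θ) + (Complex.I / 2) • toC (Jext m n k)).PosSemidef := by
  set T : ℕ → Set (Matrix (Fin (2 * n)) (Fin (2 * n)) ℝ) := fun k =>
    {θ | (toC (Sext k A B C θ) + (Complex.I / 2) • toC (Jext m n k)).PosSemidef} with hT
  have hmono : ∀ {k k' : ℕ}, k ≤ k' → T k' ⊆ T k := fun h θ hθ =>
    restrict_psd h A B C θ hθ
  have hBox : IsCompact {θ : Matrix (Fin (2 * n)) (Fin (2 * n)) ℝ |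
      ∀ i j, θ i j ∈ Set.Icc (-((C i i + C j j) / 2)) ((C i i + C j j) / 2)} := by
    have h1 : IsCompact (Set.univ.pi fun i : Fin (2 * n) =>
        Set.univ.pi fun j : Fin (2 * n) =>
          Set.Icc (-((C i i + C j j) / 2)) ((C i i + C j j) / 2)) :=
      isCompact_univ_pi fun i => isCompact_univ_pi fun j => isCompact_Icc
    have h2 : {θ : Matrix (Fin (2 * n)) (Fin (2 * n)) ℝ |
        ∀ i j, θ i j ∈ Set.Icc (-((C i i + C j j) / 2)) ((C i i + C j j) / 2)}
        = Set.univ.pi fun i : Fin (2 * n) =>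
            Set.univ.pi fun j : Fin (2 * n) =>
              Set.Icc (-((C i i + C j j) / 2)) ((C i i + C j j) / 2) := by
      ext θ
      constructor
      · exact fun h => Set.mem_univ_pi.mpr fun i => Set.mem_univ_pi.mpr fun j => h i j
      · exact fun h i j => Set.mem_univ_pi.mp (Set.mem_univ_pi.mp h i) j
    rw [h2]; exact h1
  have hcompact : IsCompact (T 2) := by
    refine hBox.of_isClosed_subset (closed_T A B C) ?_
    intro θ hθ i j
    have := theta_bound A B C θ hθ i j
    rw [abs_le] at this
    exact ⟨this.1, this.2⟩
  obtain ⟨θ, hθ⟩ := IsCompact.nonempty_iInter_of_sequence_nonempty_isCompact_isClosed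
    (fun j => T (j + 2))
    (fun j => hmono (by omega))
    (fun j => (hext (j + 2) (by omega)).imp fun _ h => h)
    hcompact
    (fun j => closed_T A B C)
  refine ⟨θ, fun k hk => ?_⟩
  have hk2 : θ ∈ T (k + 2) := by
    have := Set.mem_iInter.mp hθ k
    exact this
  exact hmono (by omega) hk2
end
end

section
/- Let (Ω, 𝓕) be a measurable space, μ a finite (nonnegative) measure on Ω, d ≥ 1, and for each pair i, j ∈ Fin d let ν_{ij} be a complex measure on Ω that is absolutely continuous with respect to μ, such that for every measurable set F the d×d complex matrix (ν_{ij}(F))_{i,j} is positive semidefinite. Then, for μ-almost every ω ∈ Ω, the d×d matrix of Radon–Nikodym derivatives ((dν_{ij}/dμ)(ω))_{i,j} is positive semidefinite. If in addition Σ_i ν_{ii} = μ, then for μ-almost every ω the matrix ((dν_{ij}/dμ)(ω))_{i,j} has trace 1, i.e., it is a density matrix. -/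
open Matrix MeasureTheory
open scoped ComplexOrder

theorem aux_setIntegral_rnDeriv {Ω : Type*} [MeasurableSpace Ω]
    (μ : Measure Ω) [SigmaFinite μ] (c : ComplexMeasure Ω)
    (hc : c ≪ᵥ μ.toENNRealVectorMeasure) {F : Set Ω} (hF : MeasurableSet F) :
    ∫ x in F, c.rnDeriv μ x ∂μ = c F := by
  obtain ⟨hre, him⟩ := (c.absolutelyContinuous_ennreal_iff _).mp hc
  have h1 := SignedMeasure.withDensityᵥ_rnDeriv_eq (ComplexMeasure.re c) μ hre
  have h2 := SignedMeasure.withDensityᵥ_rnDeriv_eq (ComplexMeasure.im c) μ him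
  have e1 : ∫ x in F, (ComplexMeasure.re c).rnDeriv μ x ∂μ = (c F).re := by
    conv_rhs => rw [show (c F).re = ComplexMeasure.re c F from rfl, ← h1]
    rw [withDensityᵥ_apply (SignedMeasure.integrable_rnDeriv _ _) hF]
  have e2 : ∫ x in F, (ComplexMeasure.im c).rnDeriv μ x ∂μ = (c F).im := by
    conv_rhs => rw [show (c F).im = ComplexMeasure.im c F from rfl, ← h2]
    rw [withDensityᵥ_apply (SignedMeasure.integrable_rnDeriv _ _) hF]
  apply Complex.ext
  · rw [← RCLike.re_eq_complex_re, ← integral_re (c.integrable_rnDeriv μ).integrableOn,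
      RCLike.re_eq_complex_re]
    exact e1
  · rw [← RCLike.im_eq_complex_im, ← integral_im (c.integrable_rnDeriv μ).integrableOn,
      RCLike.im_eq_complex_im]
    exact e2

/-- A complex-valued integrable function with nonnegative set integrals is a.e. nonnegative
(in the complex order). -/
theorem aux_ae_nonneg {Ω : Type*} [MeasurableSpace Ω] {μ : Measure Ω} [IsFiniteMeasure μ]
    {g : Ω → ℂ} (hg : Integrable g μ)
    (h : ∀ F : Set Ω, MeasurableSet F → 0 ≤ ∫ x in F, g x ∂μ) :
    ∀ᵐ ω ∂μ, 0 ≤ g ω := by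
  have hre : ∀ᵐ ω ∂μ, 0 ≤ (g ω).re := by
    refine ae_nonneg_of_forall_setIntegral_nonneg hg.re fun F hF _ => ?_
    have := (h F hF).1
    rwa [Complex.zero_re, ← RCLike.re_eq_complex_re,
      ← integral_re hg.integrableOn, RCLike.re_eq_complex_re] at this
  have him : (fun ω => (g ω).im) =ᵐ[μ] (fun _ => (0 : ℝ)) := by
    refine Integrable.ae_eq_of_forall_setIntegral_eq _ _ hg.im (integrable_const 0)
      fun F hF _ => ?_
    have := (h F hF).2
    rw [Complex.zero_im, ← RCLike.im_eq_complex_im,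
      ← integral_im hg.integrableOn, RCLike.im_eq_complex_im] at this
    simp [← this]
  filter_upwards [hre, him] with ω h1 h2
  rw [Complex.le_def]
  exact ⟨by simpa using h1, by simp [h2]⟩

/-- If a matrix of complex measures `ν i j ≪ μ` is positive semidefinite on every
measurable set, then the matrix of Radon--Nikodym derivatives is positive semidefinite
`μ`-a.e.; if moreover `Σ_i ν i i = μ`, then this matrix has trace `1` `μ`-a.e., i.e. it is
a density matrix. -/
theorem rnDeriv_matrix_posSemidef_ae {Ω : Type*} [MeasurableSpace Ω]
    (μ : Measure Ω) [IsFiniteMeasure μ] {d : ℕ} (hd : 1 ≤ d)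
    (ν : Fin d → Fin d → ComplexMeasure Ω)
    (hac : ∀ i j, ν i j ≪ᵥ μ.toENNRealVectorMeasure)
    (hpos : ∀ F : Set Ω, MeasurableSet F →
      (Matrix.of fun i j => ν i j F).PosSemidef) :
    (∀ᵐ ω ∂μ, (Matrix.of fun i j => (ν i j).rnDeriv μ ω).PosSemidef) ∧
      ((∀ F : Set Ω, MeasurableSet F → ∑ i, ν i i F = ((μ F).toReal : ℂ)) →
        ∀ᵐ ω ∂μ, (Matrix.of fun i j => (ν i j).rnDeriv μ ω).trace = 1) := by
  set f : Fin d → Fin d → Ω → ℂ := fun i j => (ν i j).rnDeriv μ with hf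
  have hint : ∀ i j, Integrable (f i j) μ := fun i j => (ν i j).integrable_rnDeriv μ
  have hset : ∀ i j (F : Set Ω), MeasurableSet F → ∫ x in F, f i j x ∂μ = ν i j F :=
    fun i j F hF => aux_setIntegral_rnDeriv μ (ν i j) (hac i j) hF
  -- Hermitian entries of the measure matrix
  have hherm_meas : ∀ (i j : Fin d) (F : Set Ω), MeasurableSet F →
      ν j i F = starRingEnd ℂ (ν i j F) := by
    intro i j F hF
    have h := (hpos F hF).1
    have := congrFun (congrFun h i) j
    rw [Matrix.conjTranspose_apply] at this
    simp only [Matrix.of_apply] at this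
    rw [← this]
    simp
  -- a.e. Hermitian
  have hherm : ∀ᵐ ω ∂μ, ∀ i j : Fin d, f j i ω = starRingEnd ℂ (f i j ω) := by
    rw [ae_all_iff]
    intro i
    rw [ae_all_iff]
    intro j
    have hconj : Integrable (fun x => starRingEnd ℂ (f i j x)) μ := by
      simpa using Complex.conjCLE.toContinuousLinearMap.integrable_comp (hint i j)
    refine Integrable.ae_eq_of_forall_setIntegral_eq _ _ (hint j i) hconj fun F hF _ => ?_
    rw [hset j i F hF, hherm_meas i j F hF, integral_conj, hset i j F hF]
  -- a.e. nonnegativity of the quadratic form at each vector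
  have hquad : ∀ v : Fin d → ℂ,
      ∀ᵐ ω ∂μ, 0 ≤ ∑ i, ∑ j, star (v i) * (f i j ω * v j) := by
    intro v
    have hgint : Integrable (fun ω => ∑ i, ∑ j, star (v i) * (f i j ω * v j)) μ := by
      refine integrable_finset_sum _ fun i _ => integrable_finset_sum _ fun j _ => ?_
      exact (((hint i j).mul_const (v j)).const_mul (star (v i)))
    refine aux_ae_nonneg hgint fun F hF => ?_
    have : ∫ x in F, (∑ i, ∑ j, star (v i) * (f i j x * v j)) ∂μ
        = ∑ i, ∑ j, star (v i) * (ν i j F * v j) := by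
      rw [integral_finset_sum]
      · refine Finset.sum_congr rfl fun i _ => ?_
        rw [integral_finset_sum]
        · refine Finset.sum_congr rfl fun j _ => ?_
          rw [integral_const_mul, integral_mul_const, hset i j F hF]
        · exact fun j _ => (((hint i j).mul_const (v j)).const_mul (star (v i))).integrableOn
      · exact fun i _ => (integrable_finset_sum _ fun j _ =>
          (((hint i j).mul_const (v j)).const_mul (star (v i)))).integrableOn
    rw [this]
    have h2 := (hpos F hF).dotProduct_mulVec_nonneg v
    convert h2 using 1
    simp [dotProduct, Matrix.mulVec, Finset.mul_sum]
  -- countable dense set of vectors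
  obtain ⟨s, hs_count, hs_dense⟩ := TopologicalSpace.exists_countable_dense (Fin d → ℂ)
  have hquad_s : ∀ᵐ ω ∂μ, ∀ v ∈ s, 0 ≤ ∑ i, ∑ j, star (v i) * (f i j ω * v j) :=
    (ae_ball_iff hs_count).2 fun v _ => hquad v
  have hmain : ∀ᵐ ω ∂μ, (Matrix.of fun i j => (ν i j).rnDeriv μ ω).PosSemidef := by
    filter_upwards [hherm, hquad_s] with ω h1 h2
    refine Matrix.posSemidef_iff_dotProduct_mulVec.mpr ⟨?_, ?_⟩
    · ext i j
      rw [Matrix.conjTranspose_apply, Matrix.of_apply, Matrix.of_apply]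
      rw [show (ν j i).rnDeriv μ ω = f j i ω from rfl, h1 i j,
        show (ν i j).rnDeriv μ ω = f i j ω from rfl]
      simp
    · have hcl : IsClosed {v : Fin d → ℂ | 0 ≤ ∑ i, ∑ j, star (v i) * (f i j ω * v j)} := by
        have hcont : Continuous fun v : Fin d → ℂ =>
            ∑ i, ∑ j, star (v i) * (f i j ω * v j) := by
          refine continuous_finset_sum _ fun i _ => continuous_finset_sum _ fun j _ => ?_
          exact ((continuous_apply i).star).mul (continuous_const.mul (continuous_apply j))
        have hC : IsClosed {z : ℂ | 0 ≤ z} := by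
          have : {z : ℂ | 0 ≤ z} = {z : ℂ | 0 ≤ z.re} ∩ {z : ℂ | z.im = 0} := by
            ext z
            simp [Complex.le_def, eq_comm]
          rw [this]
          exact (isClosed_le continuous_const Complex.continuous_re).inter
            (isClosed_eq Complex.continuous_im continuous_const)
        exact hC.preimage hcont
      have hall : ∀ v : Fin d → ℂ, 0 ≤ ∑ i, ∑ j, star (v i) * (f i j ω * v j) := by
        intro v
        exact hcl.closure_subset_iff.2 (fun u hu => h2 u hu) (hs_dense v)
      intro x
      have := hall x
      convert this using 1
      simp [dotProduct, Matrix.mulVec, Finset.mul_sum]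
      rfl
  refine ⟨hmain, fun htr => ?_⟩
  have htrace : (fun ω => ∑ i, f i i ω) =ᵐ[μ] (fun _ => (1 : ℂ)) := by
    refine Integrable.ae_eq_of_forall_setIntegral_eq _ _
      (integrable_finset_sum _ fun i _ => hint i i) (integrable_const 1) fun F hF _ => ?_
    rw [integral_finset_sum _ fun i _ => (hint i i).integrableOn,
      show ∑ i, ∫ x in F, f i i x ∂μ = ∑ i, ν i i F from
        Finset.sum_congr rfl fun i _ => hset i i F hF,
      htr F hF, setIntegral_const]
    simp [measureReal_def]
  filter_upwards [htrace] with ω h1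
  rw [Matrix.trace]
  simpa [Matrix.diag] using h1
end
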